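/- arXiv:0804.3639 — 6 statements merged into one kernel-verified Lean document; each statement's English description precedes it below -/
import Mathlib

section
/- For every positive integer d there exists a positive integer n_d, depending only on d, such that: for every polynomial h(t) = h_0 + h_1 t + ⋯ + h_d t^d of degree at most d with nonnegative integer coefficients and h_0 = 1, and every integer n ≥ n_d, the coefficients h_0(n), h_1(n), …, h_d(n) of U_n h(t) are all positive and form a strictly log concave (hence strictly unimodal) sequence. -/
open Polynomial

/-- `ehrG d p m = ∑_{i=0}^{d} p_i * C(m+d-i, d)`, the value at `m` of the polynomial `g`
associated to `p` by `p(t)/(1-t)^(d+1) = ∑_{m ≥ 0} g(m) tᵐ`. -/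
def ehrG (d : ℕ) (p : Polynomial ℤ) (m : ℕ) : ℤ :=
  ∑ i ∈ Finset.range (d + 1), p.coeff i * ((m + d - i).choose d : ℤ)

open Finset

lemma coeff_one_sub_X_pow (n k : ℕ) :
    ((1 - Polynomial.X : Polynomial ℤ) ^ n).coeff k = (-1) ^ k * n.choose k := by
  have h : (1 - Polynomial.X : Polynomial ℤ) = (-Polynomial.X) + 1 := by ring
  rw [h, add_pow, Polynomial.finset_sum_coeff]
  have hterm : ∀ i ∈ Finset.range (n+1),
      (((-Polynomial.X : Polynomial ℤ)) ^ i * 1 ^ (n - i) * (n.choose i : Polynomial ℤ)).coeff k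
      = if k = i then (-1 : ℤ) ^ i * (n.choose i : ℤ) else 0 := by
    intro i _
    rw [one_pow, mul_one, neg_pow, Polynomial.coeff_mul_natCast,
      show ((-1 : Polynomial ℤ) ^ i) = Polynomial.C ((-1 : ℤ) ^ i) by
        rw [← Polynomial.C_1, ← Polynomial.C_neg, ← Polynomial.C_pow],
      Polynomial.coeff_C_mul, Polynomial.coeff_X_pow]
    split_ifs with hik
    · subst hik; ring
    · ring
  rw [Finset.sum_congr rfl hterm, Finset.sum_ite_eq]
  by_cases hk : k ∈ Finset.range (n+1)
  · rw [if_pos hk]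
  · rw [if_neg hk]
    rw [Finset.mem_range, not_lt] at hk
    rw [Nat.choose_eq_zero_of_lt hk]
    simp

lemma ps_coeff_one_sub_X_pow (n k : ℕ) :
    (PowerSeries.coeff k) ((1 - PowerSeries.X : PowerSeries ℤ) ^ n)
      = (-1) ^ k * n.choose k := by
  have h : (((1 - Polynomial.X : Polynomial ℤ) ^ n : Polynomial ℤ) : PowerSeries ℤ)
      = (1 - PowerSeries.X : PowerSeries ℤ) ^ n := by
    rw [Polynomial.coe_pow, Polynomial.coe_sub, Polynomial.coe_one, Polynomial.coe_X]
  rw [← h, Polynomial.coeff_coe, coeff_one_sub_X_pow]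

lemma key (d N : ℕ) :
    ∑ p ∈ Finset.HasAntidiagonal.antidiagonal N,
      ((-1) ^ p.1 * ((d+1).choose p.1 : ℤ)) * ((p.2 + d).choose d : ℤ)
      = if N = 0 then 1 else 0 := by
  have h1 : ((1 - PowerSeries.X : PowerSeries ℤ) ^ (d+1)) *
      (PowerSeries.invOneSubPow ℤ (d+1)).val = 1 := by
    rw [← PowerSeries.invOneSubPow_inv_eq_one_sub_pow]
    exact (PowerSeries.invOneSubPow ℤ (d+1)).inv_val
  have h2 := congrArg (PowerSeries.coeff N) h1
  rw [PowerSeries.coeff_mul, PowerSeries.coeff_one] at h2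
  rw [← h2]
  apply Finset.sum_congr rfl
  intro p hp
  rw [ps_coeff_one_sub_X_pow, PowerSeries.invOneSubPow_val_succ_eq_mk_add_choose,
    PowerSeries.coeff_mk]
  ring_nf

lemma key' (d M : ℕ) :
    ∑ r ∈ Finset.range (M+1),
      (-1 : ℤ) ^ r * ((d+1).choose r : ℤ) * ((M - r + d).choose d : ℤ)
      = if M = 0 then 1 else 0 := by
  rw [← key d M, Finset.Nat.sum_antidiagonal_eq_sum_range_succ_mk]

lemma ehr_inner_sum (d i j : ℕ) (hi : i ≤ d) (hj : j ≤ d) :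
    ∑ k ∈ Finset.range (i+1),
      (-1 : ℤ) ^ (i-k) * ((d+1).choose (i-k) : ℤ) * ((k + d - j).choose d : ℤ)
      = if j = i then 1 else 0 := by
  by_cases hji : j ≤ i
  · have h1 : ∑ k ∈ Finset.range (i+1),
        (-1 : ℤ) ^ (i-k) * ((d+1).choose (i-k) : ℤ) * ((k + d - j).choose d : ℤ)
        = ∑ r ∈ Finset.range (i+1),
        (-1 : ℤ) ^ r * ((d+1).choose r : ℤ) * ((i - r + d - j).choose d : ℤ) := by
      rw [← Finset.sum_range_reflect]
      apply Finset.sum_congr rfl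
      intro r hr
      rw [Finset.mem_range] at hr
      have h2 : i + 1 - 1 - r = i - r := by omega
      have h3 : i - (i - r) = r := by omega
      rw [h2, h3]
    rw [h1]
    have h4 : ∑ r ∈ Finset.range (i+1),
        (-1 : ℤ) ^ r * ((d+1).choose r : ℤ) * ((i - r + d - j).choose d : ℤ)
        = ∑ r ∈ Finset.range (i-j+1),
        (-1 : ℤ) ^ r * ((d+1).choose r : ℤ) * ((i - r + d - j).choose d : ℤ) := by
      symm
      apply Finset.sum_subset
      · apply Finset.range_subset_range.2; omega
      · intro r hr hr'
        rw [Finset.mem_range] at hr hr'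
        have : i - r + d - j < d := by omega
        rw [Nat.choose_eq_zero_of_lt this]
        ring
    rw [h4]
    have h5 : ∑ r ∈ Finset.range (i-j+1),
        (-1 : ℤ) ^ r * ((d+1).choose r : ℤ) * ((i - r + d - j).choose d : ℤ)
        = ∑ r ∈ Finset.range (i-j+1),
        (-1 : ℤ) ^ r * ((d+1).choose r : ℤ) * ((i - j - r + d).choose d : ℤ) := by
      apply Finset.sum_congr rfl
      intro r hr
      rw [Finset.mem_range] at hr
      have he : i - r + d - j = i - j - r + d := by omega
      rw [he]
    rw [h5, key']
    by_cases hij : j = i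
    · have : i - j = 0 := by omega
      rw [if_pos this, if_pos hij]
    · have : i - j ≠ 0 := by omega
      rw [if_neg this, if_neg hij]
  · have : ∀ k ∈ Finset.range (i+1),
        (-1 : ℤ) ^ (i-k) * ((d+1).choose (i-k) : ℤ) * ((k + d - j).choose d : ℤ) = 0 := by
      intro k hk
      rw [Finset.mem_range] at hk
      have : k + d - j < d := by omega
      rw [Nat.choose_eq_zero_of_lt this]
      ring
    rw [Finset.sum_congr rfl this, Finset.sum_const_zero]
    have : j ≠ i := by omega
    simp [this]

lemma inv' (d : ℕ) (c : ℕ → ℤ) (i : ℕ) (hi : i ≤ d) :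
    ∑ k ∈ Finset.range (i+1), (-1 : ℤ)^(i-k) * ((d+1).choose (i-k) : ℤ) *
      (∑ j ∈ Finset.range (d+1), c j * ((k + d - j).choose d : ℤ)) = c i := by
  have h1 : ∀ k, (-1 : ℤ)^(i-k) * ((d+1).choose (i-k) : ℤ) *
      (∑ j ∈ Finset.range (d+1), c j * ((k + d - j).choose d : ℤ))
      = ∑ j ∈ Finset.range (d+1),
        c j * ((-1 : ℤ)^(i-k) * ((d+1).choose (i-k) : ℤ) * ((k + d - j).choose d : ℤ)) := by
    intro k
    rw [Finset.mul_sum]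
    apply Finset.sum_congr rfl
    intro j _
    ring
  simp_rw [h1]
  rw [Finset.sum_comm]
  have h2 : ∀ j ∈ Finset.range (d+1),
      ∑ k ∈ Finset.range (i+1),
        c j * ((-1 : ℤ)^(i-k) * ((d+1).choose (i-k) : ℤ) * ((k + d - j).choose d : ℤ))
      = c j * (if j = i then 1 else 0) := by
    intro j hj
    rw [Finset.mem_range] at hj
    rw [← Finset.mul_sum, ehr_inner_sum d i j hi (by omega)]
  rw [Finset.sum_congr rfl h2]
  simp [Finset.sum_ite_eq, Finset.mem_range]
  omega

def eul : ℕ → ℕ → ℕ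
  | 0, 0 => 1
  | 0, _+1 => 0
  | n+1, 0 => eul n 0
  | n+1, k+1 => (k+2) * eul n (k+1) + (n-k) * eul n k

lemma eul_zero (n : ℕ) : eul n 0 = 1 := by
  induction n with
  | zero => rfl
  | succ n ih => simpa [eul] using ih

lemma eul_zero_of_lt : ∀ n k, n < k → eul n k = 0 := by
  intro n
  induction n with
  | zero => intro k hk; match k, hk with | k+1, _ => rfl
  | succ n ih =>
    intro k hk
    match k, hk with
    | k+1, hk =>
      have h1 : eul n (k+1) = 0 := ih (k+1) (by omega)
      have h2 : n - k = 0 := by omega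
      simp [eul, h1, h2]

lemma eul_self : ∀ n, 1 ≤ n → eul n n = 0 := by
  intro n
  induction n with
  | zero => omega
  | succ n ih =>
    intro _
    match n, ih with
    | 0, _ => rfl
    | n+1, ih =>
      have h1 : eul (n+1) (n+2) = 0 := eul_zero_of_lt _ _ (by omega)
      have h2 : eul (n+1) (n+1) = 0 := ih (by omega)
      show (n+3) * eul (n+1) (n+2) + ((n+1)-(n+1)) * eul (n+1) (n+1) = 0
      simp [h1, h2]

lemma eul_pos : ∀ n k, k < n → 0 < eul n k := by
  intro n
  induction n with
  | zero => omega
  | succ n ih =>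
    intro k hk
    match k with
    | 0 => simp [eul_zero]
    | k+1 =>
      have h1 : 0 < eul n k := ih k (by omega)
      have h2 : 1 ≤ n - k := by omega
      show 0 < (k+2) * eul n (k+1) + (n-k) * eul n k
      have : 0 < (n-k) * eul n k := Nat.mul_pos h2 h1
      omega

lemma eul_sum : ∀ n, ∑ k ∈ Finset.range (n+1), eul n k = n.factorial := by
  intro n
  induction n with
  | zero => rfl
  | succ n ih =>
    have h1 : ∑ k ∈ Finset.range (n+2), eul (n+1) k
        = (∑ k ∈ Finset.range (n+1), eul (n+1) (k+1)) + eul (n+1) 0 :=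
      Finset.sum_range_succ' _ _
    have h2 : ∀ k ∈ Finset.range (n+1), eul (n+1) (k+1)
        = (k+2) * eul n (k+1) + (n-k) * eul n k := fun k _ => rfl
    have h3 : ∑ k ∈ Finset.range (n+2), (k+1) * eul n k
        = (∑ k ∈ Finset.range (n+1), (k+2) * eul n (k+1)) + 1 * eul n 0 :=
      Finset.sum_range_succ' _ _
    have h4 : ∑ k ∈ Finset.range (n+2), (k+1) * eul n k
        = (∑ k ∈ Finset.range (n+1), (k+1) * eul n k) + (n+2) * eul n (n+1) :=
      Finset.sum_range_succ _ _
    have h5 : eul n (n+1) = 0 := eul_zero_of_lt _ _ (by omega)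
    rw [h1, Finset.sum_congr rfl h2, Finset.sum_add_distrib]
    have h6 : eul (n+1) 0 = eul n 0 := rfl
    have h8 : ∑ k ∈ Finset.range (n+1), ((k+1) + (n-k)) * eul n k
        = ∑ k ∈ Finset.range (n+1), (n+1) * eul n k := by
      apply Finset.sum_congr rfl
      intro k hk
      rw [Finset.mem_range] at hk
      have he : (k+1) + (n-k) = n+1 := by omega
      rw [he]
    have h9 : ∑ k ∈ Finset.range (n+1), ((k+1) + (n-k)) * eul n k
        = (∑ k ∈ Finset.range (n+1), (k+1) * eul n k)
          + ∑ k ∈ Finset.range (n+1), (n-k) * eul n k := by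
      rw [← Finset.sum_add_distrib]
      apply Finset.sum_congr rfl
      intro k _
      ring
    have h10 : ∑ k ∈ Finset.range (n+1), (n+1) * eul n k = (n+1) * n.factorial := by
      rw [← Finset.mul_sum, ih]
    rw [h6, eul_zero, Nat.factorial_succ]
    have h13 := h8.symm.trans h9
    rw [eul_zero] at h3
    rw [h5] at h4
    rw [h4] at h3
    rw [← h10, ← h13] at *
    omega

lemma eul_lc : ∀ n : ℕ,
    (∀ j, eul n j * eul n (j+2) ≤ eul n (j+1)^2) ∧
    (∀ j, j + 3 ≤ n → eul n j * eul n (j+2) < eul n (j+1)^2) := by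
  intro n
  induction n with
  | zero =>
    constructor
    · intro j
      have hz : eul 0 (j+2) = 0 := eul_zero_of_lt _ _ (by omega)
      simp [hz]
    · intro j hj; omega
  | succ n ih =>
    obtain ⟨ihw, ihs⟩ := ih
    have strict : ∀ j, j + 3 ≤ n+1 →
        eul (n+1) j * eul (n+1) (j+2) < eul (n+1) (j+1)^2 := by
      intro j hj
      match j with
      | 0 =>
        have hn : 2 ≤ n := by omega
        have ha1 : 0 < eul n 1 := eul_pos n 1 (by omega)
        have ha2 : eul n 0 * eul n 2 ≤ eul n 1 ^ 2 := ihw 0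
        rw [eul_zero, one_mul] at ha2
        show eul (n+1) 0 * eul (n+1) 2 < eul (n+1) 1 ^ 2
        have e0 : eul (n+1) 0 = 1 := eul_zero _
        have e1 : eul (n+1) 1 = 2 * eul n 1 + (n-0) * eul n 0 := rfl
        have e2 : eul (n+1) 2 = 3 * eul n 2 + (n-1) * eul n 1 := rfl
        obtain ⟨m, hm⟩ : ∃ m, n = m + 2 := ⟨n - 2, by omega⟩
        subst hm
        rw [e0, e1, e2, eul_zero, one_mul]
        have h1 : m + 2 - 0 = m + 2 := by omega
        have h2 : m + 2 - 1 = m + 1 := by omega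
        rw [h1, h2]
        zify
        nlinarith [sq_nonneg ((eul (m+2) 1 : ℤ) - 1), sq_nonneg ((eul (m+2) 1 : ℤ))]
      | (i+1) =>
        have hi : i + 3 ≤ n := by omega
        have hq : 0 < eul n (i+1) := eul_pos _ _ (by omega)
        have hr : 0 < eul n (i+2) := eul_pos _ _ (by omega)
        have h1 : eul n i * eul n (i+2) < eul n (i+1)^2 := ihs i hi
        have h2 : eul n (i+1) * eul n (i+3) ≤ eul n (i+2)^2 := ihw (i+1)
        have h3 : eul n i * eul n (i+3) ≤ eul n (i+1) * eul n (i+2) := by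
          have hmul : (eul n i * eul n (i+3)) * (eul n (i+1) * eul n (i+2))
              ≤ (eul n (i+1) * eul n (i+2)) * (eul n (i+1) * eul n (i+2)) := by
            calc (eul n i * eul n (i+3)) * (eul n (i+1) * eul n (i+2))
                = (eul n i * eul n (i+2)) * (eul n (i+1) * eul n (i+3)) := by ring
              _ ≤ (eul n (i+1)^2) * (eul n (i+2)^2) := Nat.mul_le_mul h1.le h2
              _ = (eul n (i+1) * eul n (i+2)) * (eul n (i+1) * eul n (i+2)) := by ring
          exact Nat.le_of_mul_le_mul_right hmul (Nat.mul_pos hq hr)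
        obtain ⟨c, hc1, hc2⟩ : ∃ c, 1 ≤ c ∧ n = i + c + 2 := ⟨n - i - 2, by omega, by omega⟩
        subst hc2
        show eul (i+c+2+1) (i+1) * eul (i+c+2+1) (i+3) < eul (i+c+2+1) (i+2) ^ 2
        have b1 : eul (i+c+2+1) (i+1)
            = (i+2) * eul (i+c+2) (i+1) + ((i+c+2) - i) * eul (i+c+2) i := rfl
        have b2 : eul (i+c+2+1) (i+2)
            = (i+3) * eul (i+c+2) (i+2) + ((i+c+2) - (i+1)) * eul (i+c+2) (i+1) := rfl
        have b3 : eul (i+c+2+1) (i+3)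
            = (i+4) * eul (i+c+2) (i+3) + ((i+c+2) - (i+2)) * eul (i+c+2) (i+2) := rfl
        have s1 : (i+c+2) - i = c + 2 := by omega
        have s2 : (i+c+2) - (i+1) = c + 1 := by omega
        have s3 : (i+c+2) - (i+2) = c := by omega
        rw [b1, b2, b3, s1, s2, s3]
        set p := eul (i+c+2) i with hp
        set q := eul (i+c+2) (i+1) with hqd
        set r := eul (i+c+2) (i+2) with hrd
        set s := eul (i+c+2) (i+3) with hsd
        zify at h1 h2 h3 hq hr ⊢
        have F1 : ((i:ℤ)+2)*((i:ℤ)+4)*((q:ℤ)*s) ≤ ((i:ℤ)+2)*((i:ℤ)+4)*((r:ℤ)^2) := by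
          apply mul_le_mul_of_nonneg_left h2 (by positivity)
        have F2 : (((c:ℤ)+2)*((i:ℤ)+4))*((p:ℤ)*s)
            ≤ (((c:ℤ)+2)*((i:ℤ)+4))*((q:ℤ)*r) := by
          apply mul_le_mul_of_nonneg_left h3 (by positivity)
        have F3 : (c:ℤ)*((c:ℤ)+2)*((p:ℤ)*r) + (c:ℤ)*((c:ℤ)+2)
            ≤ (c:ℤ)*((c:ℤ)+2)*((q:ℤ)^2) := by
          have : (c:ℤ)*((c:ℤ)+2)*((p:ℤ)*r + 1) ≤ (c:ℤ)*((c:ℤ)+2)*((q:ℤ)^2) := by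
            apply mul_le_mul_of_nonneg_left (by omega) (by positivity)
          linarith
        have hc' : (1:ℤ) ≤ (c:ℤ) := by exact_mod_cast hc1
        have hcpos : (1:ℤ) ≤ (c:ℤ)*((c:ℤ)+2) := by
          have h9 := mul_le_mul hc' (show (1:ℤ) ≤ (c:ℤ)+2 by linarith)
            (by norm_num) (by linarith)
          linarith
        linarith [F1, F2, F3, hcpos, sq_nonneg ((q:ℤ) - (r:ℤ))]
    have weak : ∀ j, eul (n+1) j * eul (n+1) (j+2) ≤ eul (n+1) (j+1)^2 := by
      intro j
      by_cases hj : j + 3 ≤ n+1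
      · exact (strict j hj).le
      · have hz : eul (n+1) (j+2) = 0 := by
          rcases Nat.lt_or_ge (n+1) (j+2) with h|h
          · exact eul_zero_of_lt _ _ h
          · have he : j+2 = n+1 := by omega
            rw [he]; exact eul_self _ (by omega)
        simp [hz]
    exact ⟨weak, strict⟩

lemma choose_helper (M e : ℕ) :
    ((M:ℤ) - e) * (M.choose e : ℤ) = ((e:ℤ)+1) * (M.choose (e+1) : ℤ) := by
  rcases le_or_gt e M with h|h
  · have h1 := Nat.choose_succ_right_eq M e
    have hcast : ((M.choose (e+1) : ℤ)) * ((e:ℤ)+1) = (M.choose e : ℤ) * ((M:ℤ) - e) := by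
      have := congrArg (fun x : ℕ => (x : ℤ)) h1
      push_cast [Nat.cast_sub h] at this
      linarith [this]
    linarith
  · rw [Nat.choose_eq_zero_of_lt h, Nat.choose_eq_zero_of_lt (by omega)]
    push_cast
    ring

lemma mul_choose_helper (e k m : ℕ) :
    (m:ℤ) * ((m+k).choose e : ℤ)
      = ((k:ℤ)+1) * ((m+k).choose (e+1) : ℤ)
        + ((e:ℤ)-(k:ℤ)) * ((m+k+1).choose (e+1) : ℤ) := by
  have hp : ((m+k+1).choose (e+1) : ℤ)
      = ((m+k).choose e : ℤ) + ((m+k).choose (e+1) : ℤ) := by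
    exact_mod_cast congrArg (fun x : ℕ => (x : ℤ)) (Nat.choose_succ_succ (m+k) e)
  have hh := choose_helper (m+k) e
  push_cast at hh hp ⊢
  linear_combination hh - ((e:ℤ)-(k:ℤ))*hp

lemma worpitzky (d m : ℕ) :
    (m:ℤ)^d = ∑ k ∈ Finset.range (d+1), (eul d k : ℤ) * ((m+k).choose d : ℤ) := by
  induction d with
  | zero => simp [eul]
  | succ d ih =>
    have step : (m:ℤ)^(d+1) = ∑ k ∈ Finset.range (d+1),
        (eul d k : ℤ) * ((m:ℤ) * ((m+k).choose d : ℤ)) := by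
      rw [pow_succ, ih, Finset.sum_mul]
      apply Finset.sum_congr rfl
      intro k _
      ring
    rw [step]
    have step2 : ∀ k ∈ Finset.range (d+1),
        (eul d k : ℤ) * ((m:ℤ) * ((m+k).choose d : ℤ))
        = ((k:ℤ)+1) * (eul d k : ℤ) * ((m+k).choose (d+1) : ℤ)
          + ((d:ℤ)-(k:ℤ)) * (eul d k : ℤ) * ((m+k+1).choose (d+1) : ℤ) := by
      intro k _
      rw [mul_choose_helper d k m]
      ring
    rw [Finset.sum_congr rfl step2, Finset.sum_add_distrib]
    have hT : ∑ k ∈ Finset.range (d+2), (eul (d+1) k : ℤ) * ((m+k).choose (d+1) : ℤ)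
        = (∑ k ∈ Finset.range (d+1),
            (eul (d+1) (k+1) : ℤ) * ((m+k+1).choose (d+1) : ℤ))
          + (eul (d+1) 0 : ℤ) * ((m+0).choose (d+1) : ℤ) :=
      Finset.sum_range_succ' (fun k => (eul (d+1) k : ℤ) * ((m+k).choose (d+1) : ℤ)) (d+1)
    have hsplit : ∀ k ∈ Finset.range (d+1),
        (eul (d+1) (k+1) : ℤ) * ((m+k+1).choose (d+1) : ℤ)
        = ((k:ℤ)+2) * (eul d (k+1) : ℤ) * ((m+k+1).choose (d+1) : ℤ)
          + ((d:ℤ)-(k:ℤ)) * (eul d k : ℤ) * ((m+k+1).choose (d+1) : ℤ) := by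
      intro k hk
      rw [Finset.mem_range] at hk
      have he : eul (d+1) (k+1) = (k+2) * eul d (k+1) + (d-k) * eul d k := rfl
      rw [he]
      push_cast [Nat.cast_sub (show k ≤ d by omega)]
      ring
    rw [Finset.sum_congr rfl hsplit, Finset.sum_add_distrib] at hT
    have hA : ∑ k ∈ Finset.range (d+1),
        ((k:ℤ)+1) * (eul d k : ℤ) * ((m+k).choose (d+1) : ℤ)
        = (∑ k ∈ Finset.range d,
            (((k:ℕ)+1:ℤ)+1) * (eul d (k+1) : ℤ) * ((m+(k+1)).choose (d+1) : ℤ))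
          + (((0:ℕ):ℤ)+1) * (eul d 0 : ℤ) * ((m+0).choose (d+1) : ℤ) :=
      Finset.sum_range_succ' (fun k => ((k:ℤ)+1) * (eul d k : ℤ) * ((m+k).choose (d+1) : ℤ)) d
    have hS1 : ∑ k ∈ Finset.range (d+1),
        ((k:ℤ)+2) * (eul d (k+1) : ℤ) * ((m+k+1).choose (d+1) : ℤ)
        = ∑ k ∈ Finset.range d,
        (((k:ℕ)+1:ℤ)+1) * (eul d (k+1) : ℤ) * ((m+(k+1)).choose (d+1) : ℤ) := by
      rw [Finset.sum_range_succ]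
      have hz : eul d (d+1) = 0 := eul_zero_of_lt _ _ (by omega)
      rw [hz]
      push_cast
      rw [mul_zero, zero_mul, add_zero]
      apply Finset.sum_congr rfl
      intro k _
      push_cast
      ring_nf
    have he0 : (eul (d+1) 0 : ℤ) = (eul d 0 : ℤ) := rfl
    rw [hT, hA, hS1, he0]
    push_cast
    ring

lemma eul_le_factorial (n k : ℕ) : eul n k ≤ n.factorial := by
  rcases Nat.lt_or_ge n k with h|h
  · rw [eul_zero_of_lt n k h]; exact Nat.zero_le _
  · calc eul n k ≤ ∑ j ∈ Finset.range (n+1), eul n j :=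
        Finset.single_le_sum (fun j _ => Nat.zero_le _) (Finset.mem_range.2 (by omega))
      _ = n.factorial := eul_sum n

lemma edef_eq_eul (d i : ℕ) (hi : i ≤ d) :
    ∑ k ∈ Finset.range (i+1),
      (-1 : ℤ)^(i-k) * ((d+1).choose (i-k) : ℤ) * ((k:ℤ)^d)
      = (eul d (d-i) : ℤ) := by
  have hmain : ∀ k : ℕ,
      ∑ j ∈ Finset.range (d+1), (eul d (d-j) : ℤ) * ((k + d - j).choose d : ℤ)
      = (k:ℤ)^d := by
    intro k
    have hrefl := Finset.sum_range_reflect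
      (fun j => (eul d j : ℤ) * ((k+j).choose d : ℤ)) (d+1)
    have hcongr : ∀ j ∈ Finset.range (d+1),
        (eul d (d+1-1-j) : ℤ) * ((k+(d+1-1-j)).choose d : ℤ)
        = (eul d (d-j) : ℤ) * ((k + d - j).choose d : ℤ) := by
      intro j hj
      rw [Finset.mem_range] at hj
      have h1 : d+1-1-j = d - j := by omega
      have h2 : k+(d-j) = k + d - j := by omega
      rw [h1, h2]
    rw [Finset.sum_congr rfl hcongr] at hrefl
    rw [hrefl, ← worpitzky d k]
  have := inv' d (fun j => (eul d (d-j) : ℤ)) i hi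
  rw [← this]
  apply Finset.sum_congr rfl
  intro k _
  rw [hmain k]

lemma ehrG_zero (d : ℕ) (p : Polynomial ℤ) : ehrG d p 0 = p.coeff 0 := by
  unfold ehrG
  rw [Finset.sum_eq_single 0]
  · simp
  · intro j hj hj0
    rw [Finset.mem_range] at hj
    have : 0 + d - j < d := by omega
    rw [Nat.choose_eq_zero_of_lt this]
    ring
  · intro hh
    exact absurd (Finset.mem_range.2 (by omega)) hh

lemma choose_le_two_pow' (n r : ℕ) : n.choose r ≤ 2^n := by
  rcases Nat.lt_or_ge n r with h|h
  · rw [Nat.choose_eq_zero_of_lt h]; exact Nat.zero_le _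
  · calc n.choose r ≤ ∑ m ∈ Finset.range (n+1), n.choose m :=
        Finset.single_le_sum (fun j _ => Nat.zero_le _) (Finset.mem_range.2 (by omega))
      _ = 2^n := Nat.sum_range_choose n

lemma pow_sub_pow_le_int (a b : ℤ) (h0 : 0 ≤ b) (hba : b ≤ a) :
    ∀ e : ℕ, a^(e+1) - b^(e+1) ≤ (a-b) * (e+1) * a^e := by
  intro e
  induction e with
  | zero => simp
  | succ e ih =>
    have hb : b^(e+1) ≤ a^(e+1) := pow_le_pow_left₀ h0 hba (e+1)
    have ha0 : 0 ≤ a := le_trans h0 hba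
    have hae : 0 ≤ a^e := pow_nonneg ha0 e
    have h1 : a^(e+1+1) - b^(e+1+1) = a * (a^(e+1) - b^(e+1)) + b^(e+1) * (a-b) := by
      ring
    rw [h1]
    have h2 : a * (a^(e+1) - b^(e+1)) ≤ a * ((a-b) * (e+1) * a^e) :=
      mul_le_mul_of_nonneg_left ih ha0
    have h3 : b^(e+1) * (a-b) ≤ a^(e+1) * (a-b) :=
      mul_le_mul_of_nonneg_right hb (by linarith)
    have h4 : a * ((a-b) * ((e:ℤ)+1) * a^e) + a^(e+1) * (a-b)
        = (a-b) * ((e:ℤ)+1+1) * a^(e+1) := by ring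
    push_cast
    push_cast at h2 h4 ih
    linarith

def ehrB1 (d : ℕ) : ℕ := d.factorial + d^2 * (2*d)^d
def ehrB2 (d : ℕ) : ℕ := ehrB1 d * ((d+1) * 2^(d+1))

lemma ehrB1_pos (d : ℕ) : 0 < ehrB1 d := by
  unfold ehrB1; positivity

lemma L1 (d n k j : ℕ) (hd : 1 ≤ d) (hj : j ≤ d) (hk : k ≤ d) (hn : d + 1 ≤ n) :
    |(d.factorial : ℤ) * ((n*k + d - j).choose d : ℤ) - ((n:ℤ)*(k:ℤ))^d|
      ≤ (ehrB1 d : ℤ) * (n:ℤ)^(d-1) := by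
  have hn1 : (1:ℤ) ≤ (n:ℤ) := by exact_mod_cast (by omega : 1 ≤ n)
  have hnp : (1:ℤ) ≤ (n:ℤ)^(d-1) := by
    have := pow_le_pow_left₀ (by norm_num : (0:ℤ) ≤ 1) hn1 (d-1)
    simpa using this
  rcases Nat.eq_zero_or_pos k with hk0|hkpos
  · subst hk0
    have hch : ((n*0 + d - j).choose d) ≤ 1 := by
      rcases Nat.eq_zero_or_pos j with hj0|hjpos
      · subst hj0; simp
      · have : n*0 + d - j < d := by omega
        rw [Nat.choose_eq_zero_of_lt this]
        omega
    have hz : ((n:ℤ)*((0:ℕ):ℤ))^d = 0 := by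
      have : (n:ℤ)*((0:ℕ):ℤ) = 0 := by push_cast; ring
      rw [this]
      exact zero_pow (by omega)
    rw [hz, sub_zero, abs_mul]
    have h1 : |(d.factorial : ℤ)| = (d.factorial : ℤ) := abs_of_nonneg (by positivity)
    have h2 : |((n*0 + d - j).choose d : ℤ)| ≤ 1 := by
      rw [abs_of_nonneg (by positivity)]
      exact_mod_cast hch
    calc |(d.factorial : ℤ)| * |((n*0 + d - j).choose d : ℤ)|
        ≤ |(d.factorial : ℤ)| * 1 := mul_le_mul_of_nonneg_left h2 (abs_nonneg _)
      _ = (d.factorial : ℤ) := by rw [h1, mul_one]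
      _ ≤ (ehrB1 d : ℤ) * 1 := by
          rw [mul_one]
          exact_mod_cast Nat.le_add_right _ _
      _ ≤ (ehrB1 d : ℤ) * (n:ℤ)^(d-1) := by
          apply mul_le_mul_of_nonneg_left hnp (by positivity)
  · -- k ≥ 1
    set M : ℕ := n*k + d - j with hM
    have hnk : n ≤ n * k := Nat.le_mul_of_pos_right n hkpos
    have hdnk : d + 1 ≤ n * k := le_trans hn hnk
    have hM1 : n*k ≤ M := by omega
    have hM2 : M ≤ n*k + d := by omega
    -- upper bound
    have hup : (d.factorial : ℤ) * ((M.choose d : ℤ)) ≤ ((n:ℤ)*k + d)^d := by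
      have h1 : d.factorial * M.choose d = M.descFactorial d :=
        (Nat.descFactorial_eq_factorial_mul_choose M d).symm
      have h2 : M.descFactorial d ≤ M^d := Nat.descFactorial_le_pow M d
      have h3 : M^d ≤ (n*k+d)^d := Nat.pow_le_pow_left hM2 d
      have : d.factorial * M.choose d ≤ (n*k+d)^d := by omega
      calc (d.factorial : ℤ) * (M.choose d : ℤ) = ((d.factorial * M.choose d : ℕ) : ℤ) := by
            push_cast; ring
        _ ≤ (((n*k+d)^d : ℕ) : ℤ) := by exact_mod_cast this
        _ = ((n:ℤ)*k + d)^d := by push_cast; ring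
    -- lower bound
    have hlo : ((n:ℤ)*k - d)^d ≤ (d.factorial : ℤ) * ((M.choose d : ℤ)) := by
      have h1 : (n*k - d)^d ≤ (M + 1 - d)^d := by
        apply Nat.pow_le_pow_left
        omega
      have h2 : (M + 1 - d)^d ≤ M.descFactorial d := Nat.pow_sub_le_descFactorial M d
      have h3 : (n*k-d)^d ≤ d.factorial * M.choose d := by
        rw [Nat.descFactorial_eq_factorial_mul_choose M d] at h2
        omega
      calc ((n:ℤ)*k - d)^d = (((n*k - d : ℕ)) : ℤ)^d := by
            rw [Nat.cast_sub (by omega : d ≤ n*k)]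
            push_cast; ring_nf
        _ = (((n*k-d)^d : ℕ) : ℤ) := by push_cast; ring
        _ ≤ (((d.factorial * M.choose d : ℕ)) : ℤ) := by exact_mod_cast h3
        _ = (d.factorial : ℤ) * (M.choose d : ℤ) := by push_cast; ring
    -- the power value is between the same bounds
    have hnkd : (d:ℤ) ≤ (n:ℤ)*k := by exact_mod_cast (by omega : d ≤ n*k)
    have hlo0 : (0:ℤ) ≤ (n:ℤ)*k - d := by linarith
    have hmid1 : ((n:ℤ)*k - d)^d ≤ ((n:ℤ)*k)^d :=
      pow_le_pow_left₀ hlo0 (by linarith) d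
    have hmid2 : ((n:ℤ)*k)^d ≤ ((n:ℤ)*k + d)^d :=
      pow_le_pow_left₀ (by linarith) (by linarith) d
    -- difference of the bounding powers
    obtain ⟨e, rfl⟩ : ∃ e, d = e + 1 := ⟨d - 1, by omega⟩
    have he1 : e + 1 - 1 = e := rfl
    rw [he1] at hnp ⊢
    push_cast at hup hlo hmid1 hmid2 hnkd hlo0
    have hdiff := pow_sub_pow_le_int ((n:ℤ)*k + ((e:ℤ)+1)) ((n:ℤ)*k - ((e:ℤ)+1))
      hlo0 (by linarith) e
    have hub : ((n:ℤ)*k + ((e:ℤ)+1))^e ≤ (2*((e:ℤ)+1))^e * (n:ℤ)^e := by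
      have hk' : (k:ℤ) ≤ (e:ℤ)+1 := by exact_mod_cast hk
      have hn' : ((e:ℤ)+1)+1 ≤ (n:ℤ) := by exact_mod_cast hn
      have h1 : (n:ℤ)*k + ((e:ℤ)+1) ≤ 2*((e:ℤ)+1)*(n:ℤ) := by nlinarith [hn1]
      calc ((n:ℤ)*k + ((e:ℤ)+1))^e ≤ (2*((e:ℤ)+1)*(n:ℤ))^e :=
            pow_le_pow_left₀ (by positivity) h1 e
        _ = (2*((e:ℤ)+1))^e * (n:ℤ)^e := mul_pow _ _ _
    have hBn : ((2*((e:ℤ)+1)) * ((e:ℤ)+1)) * ((2*((e:ℤ)+1))^e) ≤ (ehrB1 (e+1) : ℤ) := by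
      have hBnat : 2*(e+1) * (e+1) * ((2*(e+1))^e) ≤ ehrB1 (e+1) := by
        unfold ehrB1
        have h2 : 2*(e+1)*(e+1)*(2*(e+1))^e ≤ ((e+1)^2 * (2*(e+1))) * (2*(e+1))^e :=
          Nat.mul_le_mul_right _ (by nlinarith)
        have h3 : ((e+1)^2 * (2*(e+1))) * (2*(e+1))^e = (e+1)^2 * (2*(e+1))^(e+1) := by
          rw [pow_succ]; ring
        omega
      calc ((2*((e:ℤ)+1)) * ((e:ℤ)+1)) * ((2*((e:ℤ)+1))^e)
          = ((2*(e+1) * (e+1) * ((2*(e+1))^e) : ℕ) : ℤ) := by push_cast; ring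
        _ ≤ (ehrB1 (e+1) : ℤ) := by exact_mod_cast hBnat
    have hnep : (0:ℤ) ≤ (n:ℤ)^e := by positivity
    have hd2 : (0:ℤ) ≤ ((n:ℤ)*k + ((e:ℤ)+1))^e := by positivity
    have htot : ((n:ℤ)*k + ((e:ℤ)+1))^(e+1) - ((n:ℤ)*k - ((e:ℤ)+1))^(e+1)
        ≤ (ehrB1 (e+1) : ℤ) * (n:ℤ)^e := by
      have h5 : (((n:ℤ)*k + ((e:ℤ)+1)) - ((n:ℤ)*k - ((e:ℤ)+1))) * ((e:ℤ)+1)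
          * ((n:ℤ)*k + ((e:ℤ)+1))^e
          = ((2*((e:ℤ)+1)) * ((e:ℤ)+1)) * ((n:ℤ)*k + ((e:ℤ)+1))^e := by ring
      rw [h5] at hdiff
      have h6 : ((2*((e:ℤ)+1)) * ((e:ℤ)+1)) * ((n:ℤ)*k + ((e:ℤ)+1))^e
          ≤ ((2*((e:ℤ)+1)) * ((e:ℤ)+1)) * ((2*((e:ℤ)+1))^e * (n:ℤ)^e) :=
        mul_le_mul_of_nonneg_left hub (by positivity)
      have h7 : ((2*((e:ℤ)+1)) * ((e:ℤ)+1)) * ((2*((e:ℤ)+1))^e * (n:ℤ)^e)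
          ≤ (ehrB1 (e+1) : ℤ) * (n:ℤ)^e := by
        have := mul_le_mul_of_nonneg_right hBn hnep
        calc ((2*((e:ℤ)+1)) * ((e:ℤ)+1)) * ((2*((e:ℤ)+1))^e * (n:ℤ)^e)
            = (((2*((e:ℤ)+1)) * ((e:ℤ)+1)) * ((2*((e:ℤ)+1))^e)) * (n:ℤ)^e := by ring
          _ ≤ (ehrB1 (e+1) : ℤ) * (n:ℤ)^e := this
      linarith
    rw [abs_le]
    constructor
    · push_cast
      push_cast at htot
      linarith
    · push_cast
      push_cast at htot
      linarith

lemma L2 (d n k : ℕ) (h : Polynomial ℤ) (hd : 1 ≤ d) (hk : k ≤ d) (hn : d+1 ≤ n)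
    (hnn : ∀ i, 0 ≤ h.coeff i) :
    |(d.factorial : ℤ) * ehrG d h (n*k)
        - (∑ j ∈ Finset.range (d+1), h.coeff j) * ((n:ℤ)*(k:ℤ))^d|
      ≤ (∑ j ∈ Finset.range (d+1), h.coeff j) * ((ehrB1 d : ℤ) * (n:ℤ)^(d-1)) := by
  unfold ehrG
  rw [Finset.mul_sum, Finset.sum_mul, ← Finset.sum_sub_distrib]
  refine le_trans (Finset.abs_sum_le_sum_abs _ _) ?_
  rw [Finset.sum_mul]
  apply Finset.sum_le_sum
  intro j hj
  rw [Finset.mem_range] at hj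
  have h1 : (d.factorial : ℤ) * (h.coeff j * ((n*k + d - j).choose d : ℤ))
      - h.coeff j * ((n:ℤ)*(k:ℤ))^d
      = h.coeff j * ((d.factorial : ℤ) * ((n*k + d - j).choose d : ℤ) - ((n:ℤ)*(k:ℤ))^d) := by
    ring
  rw [h1, abs_mul, abs_of_nonneg (hnn j)]
  exact mul_le_mul_of_nonneg_left (L1 d n k j hd (by omega) hk hn) (hnn j)

lemma L3 (d n i : ℕ) (h : Polynomial ℤ) (hd : 1 ≤ d) (hi : i ≤ d) (hn : d+1 ≤ n)
    (hnn : ∀ i, 0 ≤ h.coeff i) :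
    |(d.factorial : ℤ) * (∑ k ∈ Finset.range (i+1),
        (-1:ℤ)^(i-k) * ((d+1).choose (i-k):ℤ) * ehrG d h (n*k))
      - (∑ j ∈ Finset.range (d+1), h.coeff j) * (eul d (d-i) : ℤ) * (n:ℤ)^d|
    ≤ (∑ j ∈ Finset.range (d+1), h.coeff j) * (ehrB2 d : ℤ) * (n:ℤ)^(d-1) := by
  set H : ℤ := ∑ j ∈ Finset.range (d+1), h.coeff j with hHdef
  have hH : 0 ≤ H := Finset.sum_nonneg (fun j _ => hnn j)
  have key1 : H * (eul d (d-i):ℤ) * (n:ℤ)^d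
      = ∑ k ∈ Finset.range (i+1),
        (-1:ℤ)^(i-k) * ((d+1).choose (i-k):ℤ) * (H * ((n:ℤ)*(k:ℤ))^d) := by
    rw [← edef_eq_eul d i hi]
    rw [Finset.mul_sum, Finset.sum_mul]
    apply Finset.sum_congr rfl
    intro k _
    rw [mul_pow]
    ring
  have key2 : (d.factorial : ℤ) * (∑ k ∈ Finset.range (i+1),
        (-1:ℤ)^(i-k) * ((d+1).choose (i-k):ℤ) * ehrG d h (n*k))
      = ∑ k ∈ Finset.range (i+1),
        (-1:ℤ)^(i-k) * ((d+1).choose (i-k):ℤ) * ((d.factorial : ℤ) * ehrG d h (n*k)) := by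
    rw [Finset.mul_sum]
    apply Finset.sum_congr rfl
    intro k _
    ring
  rw [key1, key2, ← Finset.sum_sub_distrib]
  refine le_trans (Finset.abs_sum_le_sum_abs _ _) ?_
  have hterm : ∀ k ∈ Finset.range (i+1),
      |(-1:ℤ)^(i-k) * ((d+1).choose (i-k):ℤ) * ((d.factorial : ℤ) * ehrG d h (n*k))
        - (-1:ℤ)^(i-k) * ((d+1).choose (i-k):ℤ) * (H * ((n:ℤ)*(k:ℤ))^d)|
      ≤ (2:ℤ)^(d+1) * (H * ((ehrB1 d : ℤ) * (n:ℤ)^(d-1))) := by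
    intro k hk
    rw [Finset.mem_range] at hk
    have h1 : (-1:ℤ)^(i-k) * ((d+1).choose (i-k):ℤ) * ((d.factorial : ℤ) * ehrG d h (n*k))
        - (-1:ℤ)^(i-k) * ((d+1).choose (i-k):ℤ) * (H * ((n:ℤ)*(k:ℤ))^d)
        = ((-1:ℤ)^(i-k) * ((d+1).choose (i-k):ℤ))
          * ((d.factorial : ℤ) * ehrG d h (n*k) - H * ((n:ℤ)*(k:ℤ))^d) := by ring
    rw [h1, abs_mul, abs_mul, abs_pow, abs_neg, abs_one, one_pow, one_mul,
      abs_of_nonneg (show (0:ℤ) ≤ ((d+1).choose (i-k):ℤ) by positivity)]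
    have h2 : (((d+1).choose (i-k)) : ℤ) ≤ (2:ℤ)^(d+1) := by
      exact_mod_cast choose_le_two_pow' (d+1) (i-k)
    have h3 := L2 d n k h hd (by omega) hn hnn
    rw [← hHdef] at h3
    calc ((d+1).choose (i-k) : ℤ) * |(d.factorial : ℤ) * ehrG d h (n*k) - H * ((n:ℤ)*(k:ℤ))^d|
        ≤ ((d+1).choose (i-k) : ℤ) * (H * ((ehrB1 d : ℤ) * (n:ℤ)^(d-1))) :=
          mul_le_mul_of_nonneg_left h3 (by positivity)
      _ ≤ (2:ℤ)^(d+1) * (H * ((ehrB1 d : ℤ) * (n:ℤ)^(d-1))) := by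
          apply mul_le_mul_of_nonneg_right h2
          have : (0:ℤ) ≤ (ehrB1 d : ℤ) * (n:ℤ)^(d-1) := by positivity
          positivity
  refine le_trans (Finset.sum_le_sum hterm) ?_
  rw [Finset.sum_const, Finset.card_range]
  have hfin : ((i+1) : ℤ) * ((2:ℤ)^(d+1) * (H * ((ehrB1 d : ℤ) * (n:ℤ)^(d-1))))
      ≤ H * (ehrB2 d : ℤ) * (n:ℤ)^(d-1) := by
    have hc : ((i+1) : ℤ) * (2:ℤ)^(d+1) * (ehrB1 d : ℤ) ≤ (ehrB2 d : ℤ) := by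
      have : (i+1) * 2^(d+1) * ehrB1 d ≤ ehrB2 d := by
        unfold ehrB2
        calc (i+1) * 2^(d+1) * ehrB1 d ≤ (d+1) * 2^(d+1) * ehrB1 d := by
              apply Nat.mul_le_mul_right
              apply Nat.mul_le_mul_right
              omega
          _ = ehrB1 d * ((d+1) * 2^(d+1)) := by ring
      exact_mod_cast this
    have hpn : (0:ℤ) ≤ (n:ℤ)^(d-1) := by positivity
    calc ((i+1) : ℤ) * ((2:ℤ)^(d+1) * (H * ((ehrB1 d : ℤ) * (n:ℤ)^(d-1))))
        = (((i+1) : ℤ) * (2:ℤ)^(d+1) * (ehrB1 d : ℤ)) * ((n:ℤ)^(d-1)) * H := by ring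
      _ ≤ (ehrB2 d : ℤ) * ((n:ℤ)^(d-1)) * H := by
          apply mul_le_mul_of_nonneg_right _ hH
          exact mul_le_mul_of_nonneg_right hc hpn
      _ = H * (ehrB2 d : ℤ) * (n:ℤ)^(d-1) := by ring
  calc (i+1) • ((2:ℤ)^(d+1) * (H * ((ehrB1 d : ℤ) * (n:ℤ)^(d-1))))
      = ((i+1) : ℤ) * ((2:ℤ)^(d+1) * (H * ((ehrB1 d : ℤ) * (n:ℤ)^(d-1)))) := by
        rw [nsmul_eq_mul]; push_cast; ring
    _ ≤ H * (ehrB2 d : ℤ) * (n:ℤ)^(d-1) := hfin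

lemma unimodal_of_lc (d : ℕ) (a : ℕ → ℤ) (hpos : ∀ i ≤ d, 0 < a i)
    (hlc : ∀ i : ℕ, 1 ≤ i → i + 1 ≤ d → a (i-1) * a (i+1) < a i ^ 2) :
    ∃ j ≤ d, (∀ k, k < j → a k < a (k+1)) ∧
      (∀ k, j + 1 ≤ k → k < d → a (k+1) < a k) := by
  classical
  have hex : ∃ m, m = d ∨ a (m+1) ≤ a m := ⟨d, Or.inl rfl⟩
  set j := Nat.find hex with hjdef
  have hjd : j ≤ d := Nat.find_min' hex (Or.inl rfl)
  refine ⟨j, hjd, ?_, ?_⟩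
  · intro k hk
    have := Nat.find_min hex hk
    push_neg at this
    exact this.2
  · have hstart : j < d → a (j+1) ≤ a j := by
      intro hjd'
      have := Nat.find_spec hex
      rcases this with h|h
      · omega
      · exact h
    intro k hk1
    induction k, hk1 using Nat.le_induction with
    | base =>
      intro hk2
      have hd' : j + 1 < d := hk2
      have h1 : a (j+1) ≤ a j := hstart (by omega)
      have h2 := hlc (j+1) (by omega) (by omega)
      have h3 : (j+1) - 1 = j := by omega
      rw [h3] at h2
      have hj0 : 0 < a j := hpos j (by omega)
      have hj1 : 0 < a (j+1) := hpos (j+1) (by omega)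
      have h4 : a (j+1) ^ 2 ≤ a j * a (j+1) := by nlinarith
      have h5 : a j * a (j+2) < a j * a (j+1) := by
        calc a j * a (j+2) < a (j+1) ^ 2 := h2
          _ ≤ a j * a (j+1) := h4
      have := lt_of_mul_lt_mul_left h5 (le_of_lt hj0)
      simpa [show j + 1 + 1 = j + 2 by omega] using this
    | succ k hk ih =>
      intro hk2
      have hkd : k < d := by omega
      have h1 : a (k+1) < a k := ih hkd
      have h2 := hlc (k+1) (by omega) (by omega)
      have h3 : (k+1) - 1 = k := by omega
      rw [h3] at h2
      have hk0 : 0 < a k := hpos k (by omega)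
      have hk1' : 0 < a (k+1) := hpos (k+1) (by omega)
      have h4 : a (k+1) ^ 2 ≤ a k * a (k+1) := by nlinarith
      have h5 : a k * a (k+2) < a k * a (k+1) := by
        calc a k * a (k+2) < a (k+1) ^ 2 := h2
          _ ≤ a k * a (k+1) := h4
      have := lt_of_mul_lt_mul_left h5 (le_of_lt hk0)
      simpa [show k + 1 + 1 = k + 2 by omega] using this

lemma natkey (a b : ℕ) (ha : 1 ≤ a) (hb : 1 ≤ b) :
    b + 1 ≤ 8*(a+1)*(a+1)*(b+1) ∧ 4*a*b + 1 ≤ 8*(a+1)*(a+1)*(b+1) ∧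
      2*b + a*(a+b) + 1 ≤ 8*(a+1)*(a+1)*(b+1) := by
  refine ⟨?_, ?_, ?_⟩ <;>
    nlinarith [Nat.zero_le (a*a*b), Nat.zero_le (a*a), Nat.zero_le (a*b)]

lemma endgame_pos (F H P N E B c : ℤ) (hF : 1 ≤ F) (hH : 1 ≤ H) (hP : 1 ≤ P)
    (hN : 1 ≤ N) (hE : 1 ≤ E) (hB : 1 ≤ B) (hBN : B < N)
    (habs : |F * c - H * E * (P * N)| ≤ H * B * P) : 0 < c := by
  have h1 := (abs_le.mp habs).1
  have e : H * E * (P * N) - H * B * P = H * P * (E * N - B) := by ring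
  have hEN : N ≤ E * N := le_mul_of_one_le_left (by linarith) hE
  have hpos : 0 < H * P * (E * N - B) :=
    mul_pos (mul_pos (by linarith) (by linarith)) (by linarith)
  have hlow : H * P * (E * N - B) ≤ F * c := by linarith [e, h1]
  by_contra hc
  push_neg at hc
  have : F * c ≤ 0 := mul_nonpos_of_nonneg_of_nonpos (by linarith) hc
  linarith

lemma endgame_lc1 (F H P N B c1 c2 E1 E2 : ℤ) (hF : 1 ≤ F) (hH : 1 ≤ H) (hP : 1 ≤ P)
    (hN : 1 ≤ N) (hB : 1 ≤ B) (hE1 : 1 ≤ E1) (hE2 : 1 ≤ E2) (hE2F : E2 ≤ F)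
    (hbig : 2*B + F*(F+B) < N)
    (h1 : |F * c1 - H * E1 * (P * N)| ≤ H * B * P)
    (h2 : |F * c2 - H * E2 * (P * N)| ≤ H * B * P) : c2 < c1^2 := by
  have hFF : 1 ≤ F * F := by nlinarith
  have hFB : 1 ≤ F * B := by nlinarith
  have hBN : B < N := by linarith
  have hlow1 : H * P * (E1 * N - B) ≤ F * c1 := by
    have := (abs_le.mp h1).1
    linarith [this]
  have hup2 : F * c2 ≤ H * P * (E2 * N + B) := by
    have := (abs_le.mp h2).2
    linarith [this]
  have hEN : N ≤ E1 * N := le_mul_of_one_le_left (by linarith) hE1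
  have hNBnn : (0:ℤ) ≤ N - B := by linarith
  have hlow1' : H * P * (N - B) ≤ F * c1 := by
    have : H * P * (N - B) ≤ H * P * (E1 * N - B) := by
      apply mul_le_mul_of_nonneg_left _ (mul_nonneg (by linarith) (by linarith))
      linarith
    linarith
  have hlow1nn : (0:ℤ) ≤ H * P * (N - B) := by positivity
  have hs2 : (H * P * (N - B))^2 ≤ (F * c1)^2 := pow_le_pow_left₀ hlow1nn hlow1' 2
  have hup2' : F * (F * c2) ≤ F * (H * P * (E2 * N + B)) :=
    mul_le_mul_of_nonneg_left hup2 (by linarith)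
  have hHP1 : 1 ≤ H * P := by nlinarith
  have hkey : F * (E2 * N + B) < (N - B)^2 := by
    have t1 : (2*B + F*(F+B)) * N < N * N := mul_lt_mul_of_pos_right hbig (by linarith)
    have t2 : E2*N ≤ F*N := mul_le_mul_of_nonneg_right hE2F (by linarith)
    have t3 : F*(E2*N) ≤ F*(F*N) := mul_le_mul_of_nonneg_left t2 (by linarith)
    have t4 : F*B ≤ F*B*N := le_mul_of_one_le_right (by linarith) hN
    nlinarith [t1, t3, t4, sq_nonneg B]
  have hmid : F * (H * P * (E2 * N + B)) < (H * P * (N - B))^2 := by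
    have e1 : F * (H * P * (E2 * N + B)) = (H*P) * (F * (E2 * N + B)) := by ring
    have e2 : (H * P * (N - B))^2 = (H*P)^2 * (N - B)^2 := by ring
    rw [e1, e2]
    have hsq : H*P ≤ (H*P)^2 := by nlinarith [hHP1]
    calc (H*P) * (F * (E2 * N + B)) < (H*P) * ((N-B)^2) :=
          mul_lt_mul_of_pos_left hkey (by linarith)
      _ ≤ (H*P)^2 * (N - B)^2 := mul_le_mul_of_nonneg_right hsq (sq_nonneg (N-B))
  have : F * (F * c2) < (F * c1)^2 := by linarith
  have e3 : F * (F * c2) = F^2 * c2 := by ring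
  have e4 : (F * c1)^2 = F^2 * c1^2 := by ring
  rw [e3, e4] at this
  exact lt_of_mul_lt_mul_left this (by positivity)

lemma endgame_lc2 (F H P N B u v w E1 E2 E3 : ℤ) (hF : 1 ≤ F) (hH : 1 ≤ H) (hP : 1 ≤ P)
    (hN : 1 ≤ N) (hB : 1 ≤ B)
    (hE1 : 1 ≤ E1) (hE2 : 1 ≤ E2) (hE3 : 1 ≤ E3)
    (hle1 : E1 ≤ F) (hle2 : E2 ≤ F) (hle3 : E3 ≤ F)
    (hstrict : E1 * E3 + 1 ≤ E2^2)
    (hbig : 4*F*B < N)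
    (hu : |F * u - H * E1 * (P * N)| ≤ H * B * P)
    (hv : |F * v - H * E2 * (P * N)| ≤ H * B * P)
    (hw : |F * w - H * E3 * (P * N)| ≤ H * B * P) : u * w < v^2 := by
  have hFB : 1 ≤ F * B := by nlinarith
  have hBN : B < N := by
    have : 1*1 ≤ F*B := by nlinarith
    nlinarith
  have hHP : 1 ≤ H * P := by nlinarith
  have hupu : F * u ≤ H * P * (E1 * N + B) := by
    have := (abs_le.mp hu).2; linarith [this]
  have hupw : F * w ≤ H * P * (E3 * N + B) := by
    have := (abs_le.mp hw).2; linarith [this]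
  have hlov : H * P * (E2 * N - B) ≤ F * v := by
    have := (abs_le.mp hv).1; linarith [this]
  have hEN1 : N ≤ E1 * N := le_mul_of_one_le_left (by linarith) hE1
  have hEN2 : N ≤ E2 * N := le_mul_of_one_le_left (by linarith) hE2
  have hEN3 : N ≤ E3 * N := le_mul_of_one_le_left (by linarith) hE3
  have hlovnn : (0:ℤ) ≤ H * P * (E2 * N - B) := by
    apply mul_nonneg (by linarith)
    linarith
  have hulow : 0 < F * u := by
    have h1 := (abs_le.mp hu).1
    have e : H * E1 * (P * N) - H * B * P = H * P * (E1 * N - B) := by ring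
    have : 0 < H * P * (E1 * N - B) :=
      mul_pos (by linarith) (by linarith)
    linarith
  have hwlow : 0 < F * w := by
    have h1 := (abs_le.mp hw).1
    have e : H * E3 * (P * N) - H * B * P = H * P * (E3 * N - B) := by ring
    have : 0 < H * P * (E3 * N - B) :=
      mul_pos (by linarith) (by linarith)
    linarith
  have hcore : (E1 * N + B) * (E3 * N + B) < (E2 * N - B)^2 := by
    have f1 : (E1 * E3 + 1) * N^2 ≤ E2^2 * N^2 :=
      mul_le_mul_of_nonneg_right hstrict (by positivity)
    have hsum : E1 + E3 + 2*E2 ≤ 4*F := by linarith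
    have f2 : (E1 + E3 + 2*E2) * (B * N) ≤ 4*F * (B * N) :=
      mul_le_mul_of_nonneg_right hsum (mul_nonneg (by linarith) (by linarith))
    have f3 : (4*F*B) * N < N * N := mul_lt_mul_of_pos_right hbig (by linarith)
    nlinarith [f1, f2, f3]
  have s1 : (F * u) * (F * w) ≤ (H * P * (E1 * N + B)) * (H * P * (E3 * N + B)) :=
    mul_le_mul hupu hupw (by linarith [hwlow]) (mul_nonneg (by linarith) (by linarith))
  have s2 : (H * P * (E2 * N - B))^2 ≤ (F * v)^2 := pow_le_pow_left₀ hlovnn hlov 2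
  have s3 : (H * P * (E1 * N + B)) * (H * P * (E3 * N + B))
      < (H * P * (E2 * N - B))^2 := by
    have e1 : (H * P * (E1 * N + B)) * (H * P * (E3 * N + B))
        = (H*P)^2 * ((E1 * N + B) * (E3 * N + B)) := by ring
    have e2 : (H * P * (E2 * N - B))^2 = (H*P)^2 * ((E2 * N - B)^2) := by ring
    rw [e1, e2]
    exact mul_lt_mul_of_pos_left hcore (by positivity)
  have hfin : (F * u) * (F * w) < (F * v)^2 := by linarith
  have e3 : (F * u) * (F * w) = F^2 * (u * w) := by ring
  have e4 : (F * v)^2 = F^2 * v^2 := by ring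
  rw [e3, e4] at hfin
  exact lt_of_mul_lt_mul_left hfin (by positivity)
theorem stmt2 (d : ℕ) (hd : 0 < d) :
    ∃ nd : ℕ, 0 < nd ∧
      ∀ (h Uh : Polynomial ℤ) (n : ℕ),
        h.natDegree ≤ d → (∀ i, 0 ≤ h.coeff i) → h.coeff 0 = 1 →
        Uh.natDegree ≤ d → (∀ m : ℕ, ehrG d Uh m = ehrG d h (n * m)) →
        nd ≤ n →
        -- the coefficients h_0(n), …, h_d(n) are positive …
        (∀ i ≤ d, 0 < Uh.coeff i) ∧
        -- … strictly log concave …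
        (∀ i : ℕ, 1 ≤ i → i + 1 ≤ d →
          Uh.coeff (i - 1) * Uh.coeff (i + 1) < (Uh.coeff i) ^ 2) ∧
        -- … and hence strictly unimodal
        (∃ j ≤ d, (∀ k, k < j → Uh.coeff k < Uh.coeff (k + 1)) ∧
          (∀ k, j + 1 ≤ k → k < d → Uh.coeff (k + 1) < Uh.coeff k)) := by
  set B2 : ℕ := ehrB2 d with hB2def
  refine ⟨d + 2 + 8 * (d.factorial + 1) * (d.factorial + 1) * (B2 + 1),
    Nat.lt_of_lt_of_le (by omega) (Nat.le_add_right (d+2) _), ?_⟩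
  intro h Uh n hdeg hnn h0 hUdeg hrel hn
  -- basic numeric facts in ℕ
  have hfac1 : 1 ≤ d.factorial := Nat.one_le_iff_ne_zero.2 (Nat.factorial_ne_zero d)
  have hB21 : 1 ≤ B2 := by
    rw [hB2def]
    unfold ehrB2
    have h1 := ehrB1_pos d
    have h2 : 0 < ehrB1 d * ((d+1) * 2^(d+1)) := by positivity
    omega
  have hnn' : d + 1 ≤ n := by omega
  obtain ⟨key1, key2, key3⟩ := natkey d.factorial B2 hfac1 hB21
  have hnB2 : B2 < n := by linarith [key1, hn]
  have hn4 : 4 * d.factorial * B2 < n := by linarith [key2, hn]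
  have hni1 : 2 * B2 + d.factorial * (d.factorial + B2) < n := by linarith [key3, hn]
  -- cast to ℤ
  set F : ℤ := (d.factorial : ℤ) with hFdef
  set N : ℤ := (n : ℤ) with hNdef
  set P : ℤ := (n : ℤ)^(d-1) with hPdef
  have hF : 1 ≤ F := by rw [hFdef]; exact_mod_cast hfac1
  have hN1 : 1 ≤ N := by rw [hNdef]; exact_mod_cast (show 1 ≤ n by omega)
  have hP1 : 1 ≤ P := by
    rw [hPdef]
    have := pow_le_pow_left₀ (by norm_num : (0:ℤ) ≤ 1) hN1 (d-1)
    simpa using this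
  have hB2' : 1 ≤ (B2:ℤ) := by exact_mod_cast hB21
  have hNB2 : (B2:ℤ) < N := by rw [hNdef]; exact_mod_cast hnB2
  have hN4 : 4 * F * (B2:ℤ) < N := by
    rw [hFdef, hNdef]
    exact_mod_cast hn4
  have hNi1 : 2*(B2:ℤ) + F*(F+(B2:ℤ)) < N := by
    rw [hFdef, hNdef]
    exact_mod_cast hni1
  have hPow : N^d = P * N := by
    rw [hPdef, hNdef, ← pow_succ]
    congr 1
    omega
  -- the coefficient formula
  have hcoeff : ∀ i ≤ d, Uh.coeff i
      = ∑ k ∈ Finset.range (i+1),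
          (-1:ℤ)^(i-k) * ((d+1).choose (i-k):ℤ) * ehrG d h (n*k) := by
    intro i hi
    have hinv := inv' d (fun j => Uh.coeff j) i hi
    rw [← hinv]
    apply Finset.sum_congr rfl
    intro k _
    congr 1
    have : (∑ j ∈ Finset.range (d+1), Uh.coeff j * ((k + d - j).choose d : ℤ))
        = ehrG d Uh k := rfl
    rw [this, hrel k]
  set H : ℤ := ∑ j ∈ Finset.range (d+1), h.coeff j with hHdef
  have hH0 : 0 ≤ H := Finset.sum_nonneg (fun j _ => hnn j)
  have hH1 : 1 ≤ H := by
    have h1 : h.coeff 0 ≤ H := by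
      rw [hHdef]
      exact Finset.single_le_sum (fun j _ => hnn j) (Finset.mem_range.2 (by omega))
    rw [h0] at h1
    exact h1
  have hest : ∀ i ≤ d,
      |F * Uh.coeff i - H * (eul d (d-i):ℤ) * N^d| ≤ H * (B2:ℤ) * P := by
    intro i hi
    rw [hcoeff i hi]
    exact L3 d n i h (by omega) hi (by omega) hnn
  -- coefficient 0 is 1
  have hc0 : Uh.coeff 0 = 1 := by
    rw [hcoeff 0 (by omega), Finset.sum_range_one]
    simp [ehrG_zero, h0]
  have hestP : ∀ i ≤ d,
      |F * Uh.coeff i - H * (eul d (d-i):ℤ) * (P * N)| ≤ H * (B2:ℤ) * P := by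
    intro i hi
    have := hest i hi
    rw [hPow] at this
    exact this
  have hEile : ∀ m : ℕ, (eul d m : ℤ) ≤ F := by
    intro m
    rw [hFdef]
    exact_mod_cast eul_le_factorial d m
  have heul1 : ∀ i, 1 ≤ i → i ≤ d → (1:ℤ) ≤ (eul d (d-i) : ℤ) := by
    intro i h1 h2
    exact_mod_cast eul_pos d (d-i) (by omega)
  have hposc : ∀ i ≤ d, 0 < Uh.coeff i := by
    intro i hi
    rcases Nat.eq_zero_or_pos i with h1|h1
    · subst h1; rw [hc0]; norm_num
    · exact endgame_pos F H P N (eul d (d-i):ℤ) (B2:ℤ) (Uh.coeff i)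
        hF hH1 hP1 hN1 (heul1 i h1 hi) hB2' hNB2 (hestP i hi)
  have hlc : ∀ i : ℕ, 1 ≤ i → i + 1 ≤ d →
      Uh.coeff (i - 1) * Uh.coeff (i + 1) < (Uh.coeff i) ^ 2 := by
    intro i h1 h2
    rcases eq_or_lt_of_le h1 with hi1|hi2
    · -- i = 1
      have hi1' : i = 1 := hi1.symm
      subst hi1'
      have e0 : (1:ℕ) - 1 = 0 := rfl
      rw [e0, hc0, one_mul]
      exact endgame_lc1 F H P N (B2:ℤ) (Uh.coeff 1) (Uh.coeff 2)
        (eul d (d-1) : ℤ) (eul d (d-2) : ℤ)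
        hF hH1 hP1 hN1 hB2' (heul1 1 (by omega) (by omega)) (heul1 2 (by omega) (by omega))
        (hEile (d-2)) hNi1 (hestP 1 (by omega)) (hestP 2 (by omega))
    · -- 2 ≤ i
      have hi2' : 2 ≤ i := hi2
      have hstrict : (eul d (d-(i-1)) : ℤ) * (eul d (d-(i+1)) : ℤ) + 1
          ≤ (eul d (d-i) : ℤ)^2 := by
        have hj := (eul_lc d).2 (d-(i+1)) (by omega)
        have e1 : d-(i+1)+2 = d-(i-1) := by omega
        have e2 : d-(i+1)+1 = d-i := by omega
        rw [e1, e2] at hj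
        have : (eul d (d-(i+1)) * eul d (d-(i-1)) : ℤ) + 1 ≤ ((eul d (d-i))^2 : ℤ) := by
          exact_mod_cast hj
        linarith
      exact endgame_lc2 F H P N (B2:ℤ) (Uh.coeff (i-1)) (Uh.coeff i) (Uh.coeff (i+1))
        (eul d (d-(i-1)) : ℤ) (eul d (d-i) : ℤ) (eul d (d-(i+1)) : ℤ)
        hF hH1 hP1 hN1 hB2'
        (heul1 (i-1) (by omega) (by omega)) (heul1 i (by omega) (by omega))
        (heul1 (i+1) (by omega) (by omega))
        (hEile _) (hEile _) (hEile _) hstrict hN4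
        (hestP (i-1) (by omega)) (hestP i (by omega)) (hestP (i+1) (by omega))
  refine ⟨hposc, hlc, ?_⟩
  exact unimodal_of_lc d (fun k => Uh.coeff k) hposc hlc
end

section
/- For every positive integer d there exist positive integers m_d and n_d, depending only on d, such that: for every polynomial h(t) = h_0 + h_1 t + ⋯ + h_d t^d of degree at most d with nonnegative integer coefficients, h_0 = 1, which additionally satisfies h_0 + h_1 + ⋯ + h_{i+1} ≥ h_d + h_{d−1} + ⋯ + h_{d−i} for all 0 ≤ i ≤ ⌊d/2⌋ − 1, and for every integer n ≥ n_d, the coefficients of U_n h(t) satisfy the chain of strict inequalities h_0 = h_0(n) < h_d(n) < h_1(n) < h_{d−1}(n) < h_2(n) < ⋯ < h_i(n) < h_{d−i}(n) < h_{i+1}(n) < ⋯ < h_{⌊(d+1)/2⌋}(n) < m_d · h_d(n). -/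
open Polynomial

/-- The index of the `k`-th entry of the interleaved chain
`h_0, h_d, h_1, h_{d-1}, h_2, h_{d-2}, …`, which ends (at `k = d`) with `h_{⌊(d+1)/2⌋}`. -/
def chainIdx (d k : ℕ) : ℕ := if k % 2 = 0 then k / 2 else d - (k - 1) / 2

open Finset Finset.Nat

/-- tuples in `[0,n)^k` with sum `s` -/
def bcomp (k n s : ℕ) : Finset (Fin k → ℕ) :=
  (antidiagonalTuple k s).filter (fun x => ∀ t, x t < n)

def Nb (k n s : ℕ) : ℕ := (bcomp k n s).card

/-- generic cons decomposition of filtered antidiagonal tuples -/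
lemma cardCons (k s : ℕ) (Q : ℕ → Prop) [DecidablePred Q] :
    ((antidiagonalTuple (k+1) s).filter (fun x => ∀ t, Q (x t))).card
      = ∑ v ∈ range (s+1),
        ((antidiagonalTuple k (s - v)).filter (fun x => Q v ∧ ∀ t, Q (x t))).card := by
  rw [← Finset.card_sigma]
  refine Finset.card_bij' (fun x _ => (⟨x 0, Fin.tail x⟩ : Σ _v : ℕ, Fin k → ℕ))
    (fun p _ => Fin.cons p.1 p.2) ?hi ?hj ?li ?ri
  case hi =>
    intro x hx
    simp only [mem_filter, mem_antidiagonalTuple] at hx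
    obtain ⟨hsum, hQ⟩ := hx
    have hsum' : x 0 + ∑ i, Fin.tail x i = s := by
      rw [← hsum, Fin.sum_univ_succ]; rfl
    simp only [Finset.mem_sigma, Finset.mem_range, mem_filter, mem_antidiagonalTuple]
    exact ⟨by omega, by omega, hQ 0, fun t => hQ t.succ⟩
  case hj =>
    intro p hp
    simp only [Finset.mem_sigma, Finset.mem_range, mem_filter, mem_antidiagonalTuple] at hp
    obtain ⟨hv, hsum, hQv, hQ⟩ := hp
    simp only [mem_filter, mem_antidiagonalTuple]
    constructor
    · rw [Fin.sum_univ_succ]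
      simp only [Fin.cons_zero, Fin.cons_succ]
      omega
    · intro t
      refine Fin.cases ?_ ?_ t
      · simpa using hQv
      · intro j; simpa using hQ j
  case li => intro x _; exact Fin.cons_self_tail x
  case ri =>
    intro p hp
    simp only [Finset.mem_sigma, Finset.mem_range, mem_filter, mem_antidiagonalTuple] at hp
    obtain ⟨hv, hsum, hQv, hQ⟩ := hp
    simp only [Fin.cons_zero, Fin.tail_cons]

/-- hockey stick in the needed form -/
lemma hockey (k s : ℕ) :
    ∑ v ∈ range (s+1), (s - v + k).choose k = (s + k + 1).choose (k+1) := by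
  have h0 : ∀ v ∈ range (s+1), (s - v + k).choose k
      = (s + 1 - 1 - v + k).choose k := by
    intro v hv
    simp only [Finset.mem_range] at hv
    congr 2
  rw [Finset.sum_congr rfl h0,
    Finset.sum_range_reflect (fun j => (j + k).choose k) (s+1)]
  have h2 : ∑ m ∈ Icc k (s + k), m.choose k = ∑ v ∈ range (s+1), (v + k).choose k := by
    rw [← Finset.Ico_add_one_right_eq_Icc, Finset.sum_Ico_eq_sum_range]
    have h3 : s + k + 1 - k = s + 1 := by omega
    rw [h3]
    exact Finset.sum_congr rfl fun v _ => by rw [Nat.add_comm k v]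
  rw [← h2, Nat.sum_Icc_choose]

lemma card_adt (k s : ℕ) :
    (antidiagonalTuple (k+1) s).card = (s + k).choose k := by
  induction k generalizing s with
  | zero => simp [antidiagonalTuple_one]
  | succ k ih =>
    have hc := cardCons (k+1) s (fun _ => True)
    simp only [true_and] at hc
    rw [Finset.filter_true_of_mem (fun _ _ => fun _ => trivial)] at hc
    simp only [Finset.filter_true_of_mem (fun _ _ => fun _ => trivial)] at hc
    rw [hc]
    have h1 : ∀ v ∈ range (s+1),
        (antidiagonalTuple (k+1) (s - v)).card = (s - v + k).choose k := by
      intro v _; exact ih (s - v)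
    rw [Finset.sum_congr rfl h1, hockey]
    congr 1

lemma Nb_rec (k n s : ℕ) :
    Nb (k+1) n s = ∑ v ∈ range (s+1), if v < n then Nb k n (s - v) else 0 := by
  have hc := cardCons k s (fun v => v < n)
  rw [Nb, bcomp, hc]
  refine Finset.sum_congr rfl fun v _ => ?_
  by_cases hv : v < n
  · simp only [hv, if_true, true_and, Nb, bcomp]
  · simp [hv]

lemma Nb_zero (k n : ℕ) (hn : 0 < n) : Nb k n 0 = 1 := by
  rw [Nb, bcomp, antidiagonalTuple_zero_right]
  rw [Finset.filter_true_of_mem (fun x hx => ?_), Finset.card_singleton]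
  intro t
  simp only [Finset.mem_singleton] at hx
  subst hx
  simpa using hn

lemma Nb_eq_zero {k n s : ℕ} (hs : k * (n-1) < s) : Nb k n s = 0 := by
  rw [Nb, Finset.card_eq_zero, Finset.eq_empty_iff_forall_notMem]
  intro x hx
  simp only [bcomp, mem_filter, mem_antidiagonalTuple] at hx
  obtain ⟨hsum, hb⟩ := hx
  have : ∑ t, x t ≤ ∑ _t : Fin k, (n-1) := by
    exact Finset.sum_le_sum fun t _ => by have := hb t; omega
  simp only [Finset.sum_const, Finset.card_univ, Fintype.card_fin, smul_eq_mul] at this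
  omega

lemma Nb_pos {k n s : ℕ} (hn : 0 < n) (hs : s ≤ k * (n-1)) : 0 < Nb k n s := by
  induction k generalizing s with
  | zero =>
    simp only [Nat.zero_mul, Nat.le_zero] at hs
    rw [hs, Nb_zero _ _ hn]; norm_num
  | succ k ih =>
    rw [Nb_rec]
    have hkm : (k+1) * (n-1) = k * (n-1) + (n-1) := by ring
    set v := min (n-1) s with hv
    have hvr : v ∈ range (s+1) := by simp only [Finset.mem_range]; omega
    have hterm : 0 < (if v < n then Nb k n (s - v) else 0) := by
      have hvn : v < n := by omega
      rw [if_pos hvn]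
      refine ih ?_
      generalize hK : k * (n-1) = K at *
      omega
    calc 0 < (if v < n then Nb k n (s - v) else 0) := hterm
      _ ≤ _ := Finset.single_le_sum (f := fun w => if w < n then Nb k n (s - w) else 0)
          (fun i _ => Nat.zero_le _) hvr

lemma Nb_le (k n s : ℕ) : Nb (k+1) n s ≤ n^k := by
  induction k generalizing s with
  | zero =>
    rw [pow_zero, Nb, bcomp]
    calc ((antidiagonalTuple 1 s).filter _).card ≤ (antidiagonalTuple 1 s).card :=
          Finset.card_filter_le _ _
      _ = 1 := by rw [antidiagonalTuple_one, Finset.card_singleton]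
  | succ k ih =>
    rw [Nb_rec]
    calc ∑ v ∈ range (s+1), (if v < n then Nb (k+1) n (s - v) else 0)
        ≤ ∑ v ∈ range (s+1), (if v < n then n^k else 0) := by
          refine Finset.sum_le_sum fun v _ => ?_
          by_cases hv : v < n
          · simpa [hv] using ih (s - v)
          · simp [hv]
      _ = ∑ v ∈ (range (s+1)).filter (· < n), n^k := by
          rw [Finset.sum_filter]
      _ = ((range (s+1)).filter (· < n)).card * n^k := by
          rw [Finset.sum_const, smul_eq_mul]
      _ ≤ n * n^k := by
          have hsub : (range (s+1)).filter (· < n) ⊆ range n := by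
            intro v hvm
            simp only [Finset.mem_filter, Finset.mem_range] at hvm ⊢
            exact hvm.2
          exact Nat.mul_le_mul_right _ (by simpa using Finset.card_le_card hsub)
      _ = n^(k+1) := by ring

lemma Nb_ge {k n s : ℕ} (hn : 0 < n) (hs : s ≤ n - 1) :
    (s + k).choose k ≤ Nb (k+1) n s := by
  induction k generalizing s with
  | zero =>
    rw [Nb, bcomp, antidiagonalTuple_one]
    rw [Finset.filter_true_of_mem (fun x hx => ?_), Finset.card_singleton]
    · simp
    · intro t
      simp only [Finset.mem_singleton] at hx
      subst hx
      simp only [Matrix.cons_val_fin_one]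
      omega
  | succ k ih =>
    rw [Nb_rec]
    calc (s + (k+1)).choose (k+1) = (s + k + 1).choose (k+1) := by ring_nf
      _ = ∑ v ∈ range (s+1), (s - v + k).choose k := (hockey k s).symm
      _ ≤ ∑ v ∈ range (s+1), (if v < n then Nb (k+1) n (s - v) else 0) := by
          refine Finset.sum_le_sum fun v hv => ?_
          simp only [Finset.mem_range] at hv
          have hvn : v < n := by omega
          rw [if_pos hvn]
          exact ih (by omega)

lemma Nb_symm {k n s : ℕ} (hs : s ≤ k * (n-1)) :
    Nb k n (k * (n-1) - s) = Nb k n s := by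
  rw [Nb, Nb]
  refine Finset.card_nbij' (fun x => fun t => n - 1 - x t)
    (fun x => fun t => n - 1 - x t) ?hi ?hj ?li ?ri
  case hi =>
    intro x hx
    simp only [Finset.mem_coe, bcomp, mem_filter, mem_antidiagonalTuple] at hx ⊢
    obtain ⟨hsum, hb⟩ := hx
    constructor
    · have key : ∑ t, (n - 1 - x t) + ∑ t, x t = k * (n-1) := by
        rw [← Finset.sum_add_distrib]
        have : ∀ t : Fin k, (n - 1 - x t) + x t = n - 1 := fun t => by
          have := hb t; omega
        rw [Finset.sum_congr rfl (fun t _ => this t)]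
        simp [Finset.sum_const, Finset.card_univ, mul_comm]
      have hle : s ≤ k * (n-1) := hs
      generalize hK : k * (n-1) = K at *
      omega
    · intro t; have := hb t; omega
  case hj =>
    intro x hx
    simp only [Finset.mem_coe, bcomp, mem_filter, mem_antidiagonalTuple] at hx ⊢
    obtain ⟨hsum, hb⟩ := hx
    constructor
    · have key : ∑ t, (n - 1 - x t) + ∑ t, x t = k * (n-1) := by
        rw [← Finset.sum_add_distrib]
        have : ∀ t : Fin k, (n - 1 - x t) + x t = n - 1 := fun t => by
          have := hb t; omega
        rw [Finset.sum_congr rfl (fun t _ => this t)]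
        simp [Finset.sum_const, Finset.card_univ, mul_comm]
      generalize hK : k * (n-1) = K at *
      omega
    · intro t; have := hb t; omega
  case li =>
    intro x hx
    simp only [Finset.mem_coe, bcomp, mem_filter, mem_antidiagonalTuple] at hx
    funext t
    have := hx.2 t
    simp only []
    omega
  case ri =>
    intro x hx
    simp only [Finset.mem_coe, bcomp, mem_filter, mem_antidiagonalTuple] at hx
    funext t
    have := hx.2 t
    simp only []
    omega

lemma stepRec (k n s : ℕ) (hn : 0 < n) :
    Nb (k+1) n (s+1) + (if n-1 ≤ s then Nb k n (s - (n-1)) else 0)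
      = Nb (k+1) n s + Nb k n (s+1) := by
  rw [Nb_rec k n (s+1), Nb_rec k n s]
  rw [Finset.sum_range_succ' (fun v => if v < n then Nb k n (s + 1 - v) else 0) (s+1)]
  simp only [Nat.succ_sub_succ_eq_sub, Nat.sub_zero, if_pos hn]
  have hcor : (if n-1 ≤ s then Nb k n (s - (n-1)) else 0)
      = ∑ v ∈ range (s+1), (if v = n-1 then Nb k n (s - v) else 0) := by
    rw [Finset.sum_ite_eq' (range (s+1)) (n-1) (fun v => Nb k n (s - v))]
    simp only [Finset.mem_range]
    by_cases hle : n - 1 ≤ s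
    · rw [if_pos hle, if_pos (by omega)]
    · rw [if_neg hle, if_neg (by omega)]
  rw [hcor, add_right_comm, ← Finset.sum_add_distrib]
  congr 1
  refine Finset.sum_congr rfl fun v _ => ?_
  by_cases h1 : v + 1 < n
  · rw [if_pos h1, if_neg (by omega), if_pos (by omega), Nat.add_zero]
  · by_cases h2 : v = n - 1
    · rw [if_neg h1, if_pos h2, if_pos (by omega), Nat.zero_add]
    · rw [if_neg h1, if_neg h2, if_neg (by omega), Nat.add_zero]

def CW (k : ℕ) : Prop := ∀ n x y, x ≤ y → x + y ≤ k * (n-1) → Nb k n x ≤ Nb k n y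
def CS (k : ℕ) : Prop := ∀ n x y, 2 ≤ n → x < y → x + y < k * (n-1) → Nb k n x < Nb k n y

lemma stepW {k : ℕ} (hcw : CW k) :
    ∀ n s, 2*s+1 ≤ (k+1) * (n-1) → Nb (k+1) n s ≤ Nb (k+1) n (s+1) := by
  intro n s hs
  have hn : 0 < n := by
    rcases Nat.eq_zero_or_pos n with h | h
    · subst h; simp at hs
    · exact h
  have hid := stepRec k n s hn
  by_cases hg : n - 1 ≤ s
  · rw [if_pos hg] at hid
    have hcmp : Nb k n (s - (n-1)) ≤ Nb k n (s+1) := by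
      refine hcw n _ _ (by omega) ?_
      have hexp : (k+1) * (n-1) = k * (n-1) + (n-1) := by ring
      generalize hK : k * (n-1) = K at *
      omega
    omega
  · rw [if_neg hg] at hid
    omega

lemma chainW {k : ℕ} (hcw : CW k) :
    ∀ n a b, a ≤ b → 2*b ≤ (k+1) * (n-1) → Nb (k+1) n a ≤ Nb (k+1) n b := by
  intro n a b hab hb
  obtain ⟨c, rfl⟩ := Nat.exists_eq_add_of_le hab
  clear hab
  revert hb
  induction c with
  | zero => intro _; exact le_refl _
  | succ c ih =>
    intro hb
    calc Nb (k+1) n a ≤ Nb (k+1) n (a+c) := ih (by omega)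
      _ ≤ Nb (k+1) n (a+c+1) := stepW hcw n (a+c) (by omega)
      _ = Nb (k+1) n (a+(c+1)) := by ring_nf

lemma cwSucc {k : ℕ} (hcw : CW k) : CW (k+1) := by
  intro n x y hxy hsum
  by_cases h2 : 2*y ≤ (k+1) * (n-1)
  · exact chainW hcw n x y hxy h2
  · have hyC : y ≤ (k+1) * (n-1) := by omega
    have hsym := Nb_symm (k := k+1) (n := n) (s := y) hyC
    rw [← hsym]
    exact chainW hcw n x ((k+1)*(n-1) - y) (by omega) (by omega)

lemma stepS {k : ℕ} (hk : 1 ≤ k) (hcw : CW k) (hcs : 2 ≤ k → CS k) :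
    ∀ n s, 2 ≤ n → 2*s+2 ≤ (k+1) * (n-1) → Nb (k+1) n s < Nb (k+1) n (s+1) := by
  intro n s hn hs
  have hid := stepRec k n s (by omega)
  have hexp : (k+1) * (n-1) = k * (n-1) + (n-1) := by ring
  by_cases hg : n - 1 ≤ s
  · rw [if_pos hg] at hid
    rcases Nat.lt_or_ge k 2 with hk2 | hk2
    · -- k = 1 : contradiction with hg
      interval_cases k
      · omega
    · have hcmp : Nb k n (s - (n-1)) < Nb k n (s+1) := by
        refine hcs hk2 n _ _ hn (by omega) ?_
        generalize hK : k * (n-1) = K at *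
        omega
      omega
  · rw [if_neg hg] at hid
    have hpos : 0 < Nb k n (s+1) := by
      refine Nb_pos (by omega) ?_
      have hk1 : 1 * (n-1) ≤ k * (n-1) := Nat.mul_le_mul_right _ hk
      generalize hK : k * (n-1) = K at *
      omega
    omega

lemma csSucc {k : ℕ} (hk : 1 ≤ k) (hcw : CW k) (hcs : 2 ≤ k → CS k) : CS (k+1) := by
  intro n x y hn hxy hsum
  set C := (k+1) * (n-1) with hC
  have hyC : y ≤ C := by omega
  set z := min y (C - y) with hz
  have hxz : x < z := by omega
  have h2z : 2*z ≤ C := by omega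
  have hNz : Nb (k+1) n z = Nb (k+1) n y := by
    rcases Nat.le_total y (C - y) with h | h
    · rw [hz, min_eq_left h]
    · rw [hz, min_eq_right h]
      exact Nb_symm hyC
  calc Nb (k+1) n x < Nb (k+1) n (x+1) := stepS hk hcw hcs n x hn (by omega)
    _ ≤ Nb (k+1) n z := chainW hcw n (x+1) z (by omega) (by omega)
    _ = Nb (k+1) n y := hNz

lemma mono_pack : ∀ k, CW k ∧ (2 ≤ k → CS k) := by
  intro k
  induction k with
  | zero =>
    constructor
    · intro n x y hxy hsum
      simp only [Nat.zero_mul, Nat.le_zero] at hsum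
      have hx0 : x = 0 ∧ y = 0 := by omega
      rw [hx0.1, hx0.2]
    · intro h; exact absurd h (by omega)
  | succ k ih =>
    obtain ⟨hcw, hcs⟩ := ih
    refine ⟨cwSucc hcw, fun h2 => csSucc (by omega) hcw hcs⟩

theorem mono_w {k n x y : ℕ} (hxy : x ≤ y) (hsum : x + y ≤ k * (n-1)) :
    Nb k n x ≤ Nb k n y := (mono_pack k).1 n x y hxy hsum

theorem mono_s {k n x y : ℕ} (hk : 2 ≤ k) (hn : 2 ≤ n) (hxy : x < y)
    (hsum : x + y < k * (n-1)) : Nb k n x < Nb k n y :=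
  (mono_pack k).2 hk n x y hn hxy hsum

lemma key_s4 (d n i : ℕ) (hi : i ≤ d) (hn : d + 2 ≤ n) (m : ℕ) :
    (n*m + d - i).choose d
      = ∑ j ∈ range (d+1),
          (if i ≤ j*n then Nb (d+1) n (j*n - i) else 0) * (m + d - j).choose d := by
  rcases Nat.eq_zero_or_pos m with hm | hm
  · -- m = 0
    subst hm
    rw [Finset.sum_eq_single 0]
    · simp only [Nat.zero_mul, Nat.mul_zero, Nat.zero_add]
      by_cases h0 : i = 0
      · subst h0
        simp only [Nat.le_refl, if_pos, Nat.sub_zero, Nat.choose_self]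
        rw [Nb_zero _ _ (by omega)]
      · rw [if_neg (by omega), Nat.zero_mul, Nat.choose_eq_zero_of_lt (by omega)]
    · intro j hj hj0
      simp only [Finset.mem_range] at hj
      rw [Nat.choose_eq_zero_of_lt (by omega), Nat.mul_zero]
    · intro h; exact absurd (by simp) h
  · -- m ≥ 1
    have hnm : i ≤ n*m := by
      have : n*1 ≤ n*m := Nat.mul_le_mul_left n hm
      omega
    have hterm : ∀ j ∈ range (d+1),
        (if i ≤ j*n then Nb (d+1) n (j*n - i) else 0) * (m + d - j).choose d
        = (((antidiagonalTuple (d+1) (j*n - i)).filter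
              (fun r => (∀ t, r t < n) ∧ i ≤ j*n)) ×ˢ
           ((antidiagonalTuple (d+1) (m - j)).filter (fun _ => j ≤ m))).card := by
      intro j hj
      simp only [Finset.mem_range] at hj
      rw [Finset.card_product]
      congr 1
      · by_cases hg : i ≤ j*n
        · rw [if_pos hg, Nb, bcomp]
          congr 1
          refine Finset.filter_congr fun r _ => ?_
          simp [hg]
        · rw [if_neg hg, eq_comm, Finset.card_eq_zero, Finset.filter_eq_empty_iff]
          intro r _
          simp only [hg, and_false, not_false_iff]
      · by_cases hjm : j ≤ m
        · rw [Finset.filter_true_of_mem (fun _ _ => hjm), card_adt]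
          congr 1
          omega
        · rw [Finset.filter_false_of_mem (fun _ _ => hjm), Finset.card_empty,
            Nat.choose_eq_zero_of_lt (by omega)]
    rw [Finset.sum_congr rfl hterm]
    rw [← Finset.card_sigma]
    have hmain : (n*m + d - i).choose d = ((n*m - i) + d).choose d := by
      congr 1; omega
    rw [hmain, ← card_adt d (n*m - i)]
    have hn0 : 0 < n := by omega
    have hcomm : ∀ a : ℕ, n * a = a * n := fun a => Nat.mul_comm _ _
    have hC : (d+1) * (n-1) + (d+1) = (d+1) * n := by
      have h1 : n - 1 + 1 = n := by omega
      calc (d+1) * (n-1) + (d+1) = (d+1) * ((n-1)+1) := by ring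
        _ = (d+1) * n := by rw [h1]
    refine Finset.card_nbij'
      (fun c => ⟨m - ∑ t, c t / n, (fun t => c t % n, fun t => c t / n)⟩)
      (fun p => fun t => n * p.2.2 t + p.2.1 t) ?hi ?hj ?li ?ri
    case hi =>
      intro c hc
      simp only [Finset.mem_coe, mem_antidiagonalTuple] at hc
      have hb : ∀ t, c t % n < n := fun t => Nat.mod_lt _ hn0
      have e1 : n * (∑ t, c t / n) + (∑ t, c t % n) = n*m - i := by
        rw [Finset.mul_sum, ← Finset.sum_add_distrib, ← hc]
        exact Finset.sum_congr rfl fun t _ => Nat.div_add_mod (c t) n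
      have e2 : (∑ t, c t % n) ≤ (d+1) * (n-1) := by
        calc (∑ t, c t % n) ≤ ∑ _t : Fin (d+1), (n-1) :=
              Finset.sum_le_sum fun t _ => by have := hb t; omega
          _ = (d+1) * (n-1) := by
              simp [Finset.sum_const, Finset.card_univ, mul_comm]
      have e3 : (∑ t, c t / n) ≤ m := by
        refine Nat.le_of_mul_le_mul_left ?_ hn0
        omega
      have e4 : n * (m - ∑ t, c t / n) + n * (∑ t, c t / n) = n * m := by
        rw [← Nat.mul_add]
        congr 1
        omega
      have e5 : n * (m - ∑ t, c t / n) = (∑ t, c t % n) + i := by omega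
      have e6 : n * (m - ∑ t, c t / n) < n * (d+1) := by
        have h7 := hcomm (d+1)
        omega
      have hjd : m - (∑ t, c t / n) ≤ d := by
        have := Nat.lt_of_mul_lt_mul_left e6
        omega
      have h8 := hcomm (m - ∑ t, c t / n)
      simp only [Finset.mem_coe, Finset.mem_sigma, Finset.mem_range, Finset.mem_product, mem_filter,
        mem_antidiagonalTuple]
      refine ⟨by omega, ⟨by omega, fun t => hb t, by omega⟩, by omega, by omega⟩
    case hj =>
      intro p hp
      obtain ⟨j, r, q⟩ := p
      simp only [Finset.mem_coe, Finset.mem_sigma, Finset.mem_range, Finset.mem_product, mem_filter,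
        mem_antidiagonalTuple] at hp
      obtain ⟨hjd, ⟨hrs, hrb, hig⟩, hqs, hjm⟩ := hp
      simp only [Finset.mem_coe, mem_antidiagonalTuple]
      have e1 : ∑ t, (n * q t + r t) = n * (∑ t, q t) + ∑ t, r t := by
        rw [Finset.mul_sum, ← Finset.sum_add_distrib]
      rw [e1, hrs, hqs]
      have e2 : n * (m - j) + n * j = n * m := by
        rw [← Nat.mul_add]; congr 1; omega
      have e3 := hcomm j
      omega
    case li =>
      intro c _
      funext t
      simp only []
      exact Nat.div_add_mod (c t) n
    case ri =>
      intro p hp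
      obtain ⟨j, r, q⟩ := p
      simp only [Finset.mem_coe, Finset.mem_sigma, Finset.mem_range, Finset.mem_product, mem_filter,
        mem_antidiagonalTuple] at hp
      obtain ⟨hjd, ⟨hrs, hrb, hig⟩, hqs, hjm⟩ := hp
      have hdiv : ∀ t, (n * q t + r t) / n = q t := by
        intro t
        rw [Nat.mul_add_div hn0, Nat.div_eq_of_lt (hrb t), Nat.add_zero]
      have hmod : ∀ t, (n * q t + r t) % n = r t := by
        intro t
        rw [Nat.mul_add_mod, Nat.mod_eq_of_lt (hrb t)]
      have hf1 : (fun t => (n * q t + r t) % n) = r := funext fun t => hmod t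
      have hf2 : (fun t => (n * q t + r t) / n) = q := funext fun t => hdiv t
      have hsq : (∑ t, (n * q t + r t) / n) = m - j := by
        rw [Finset.sum_congr rfl (fun t _ => hdiv t), hqs]
      have hjj : m - (∑ t, (n * q t + r t) / n) = j := by
        rw [hsq]; omega
      simp only []
      rw [hf1, hf2]
      have hq2 : m - ∑ t, q t = j := by rw [hqs]; omega
      rw [hq2]

noncomputable def Wf (d n : ℕ) (h : Polynomial ℤ) (j : ℕ) : ℤ :=
  ∑ i ∈ Finset.range (d+1),
    h.coeff i * (if i ≤ j*n then (Nb (d+1) n (j*n - i) : ℤ) else 0)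

/-- split off the diagonal term -/
lemma sum_split (F : ℕ → ℤ) (d j : ℕ) (hj : j ≤ d) :
    ∑ i ∈ range (d+1), F i * ((j + d - i).choose d : ℤ)
      = F j + ∑ i ∈ range j, F i * ((j + d - i).choose d : ℤ) := by
  have hsplit := Finset.sum_Ico_consecutive (fun i => F i * ((j + d - i).choose d : ℤ))
    (Nat.zero_le (j+1)) (by omega : j + 1 ≤ d + 1)
  rw [Finset.range_eq_Ico, ← hsplit]
  have h2 : ∑ i ∈ Finset.Ico (j+1) (d+1), F i * ((j + d - i).choose d : ℤ) = 0 := by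
    refine Finset.sum_eq_zero fun i hi => ?_
    simp only [Finset.mem_Ico] at hi
    rw [Nat.choose_eq_zero_of_lt (by omega)]
    simp
  rw [h2, add_zero, ← Finset.range_eq_Ico, Finset.sum_range_succ]
  have h3 : ((j + d - j).choose d : ℤ) = 1 := by
    rw [show j + d - j = d by omega, Nat.choose_self, Nat.cast_one]
  rw [h3, mul_one, add_comm]

lemma bridge (d n : ℕ) (h Uh : Polynomial ℤ) (hn : d + 2 ≤ n)
    (heq : ∀ m : ℕ, ehrG d Uh m = ehrG d h (n * m)) :
    ∀ j, j ≤ d → Uh.coeff j = Wf d n h j := by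
  intro j
  induction j using Nat.strong_induction_on with
  | _ j ih =>
    intro hj
    have hU := heq j
    rw [ehrG, ehrG] at hU
    -- LHS split
    rw [sum_split (fun i => Uh.coeff i) d j hj] at hU
    -- RHS : rewrite with key and swap
    have hkey : ∀ i ∈ range (d+1),
        h.coeff i * ((n * j + d - i).choose d : ℤ)
          = ∑ j' ∈ range (d+1),
              (h.coeff i * (if i ≤ j'*n then (Nb (d+1) n (j'*n - i) : ℤ) else 0))
                * ((j + d - j').choose d : ℤ) := by
      intro i hi
      simp only [Finset.mem_range] at hi
      have hk := key_s4 d n i (by omega) hn j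
      calc h.coeff i * ((n * j + d - i).choose d : ℤ)
          = h.coeff i * ((∑ j' ∈ range (d+1),
              (if i ≤ j'*n then Nb (d+1) n (j'*n - i) else 0)
                * (j + d - j').choose d : ℕ) : ℤ) := by rw [← hk]
        _ = ∑ j' ∈ range (d+1),
              (h.coeff i * (if i ≤ j'*n then (Nb (d+1) n (j'*n - i) : ℤ) else 0))
                * ((j + d - j').choose d : ℤ) := by
            push_cast
            rw [Finset.mul_sum]
            refine Finset.sum_congr rfl fun j' _ => ?_
            by_cases hg : i ≤ j'*n
            · simp only [hg, if_true]; ring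
            · simp only [hg, if_false]; ring
    rw [Finset.sum_congr rfl hkey, Finset.sum_comm] at hU
    have hWsum : ∀ j' ∈ range (d+1),
        ∑ i ∈ range (d+1),
            (h.coeff i * (if i ≤ j'*n then (Nb (d+1) n (j'*n - i) : ℤ) else 0))
              * ((j + d - j').choose d : ℤ)
          = Wf d n h j' * ((j + d - j').choose d : ℤ) := by
      intro j' _
      rw [Wf, Finset.sum_mul]
    rw [Finset.sum_congr rfl hWsum, sum_split (fun j' => Wf d n h j') d j hj] at hU
    have hlt : ∀ i ∈ range j, Uh.coeff i = Wf d n h i := by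
      intro i hi
      have h1 := Finset.mem_range.mp hi
      exact ih i h1 (by omega)
    have : ∑ i ∈ range j, Uh.coeff i * ((j + d - i).choose d : ℤ)
        = ∑ i ∈ range j, Wf d n h i * ((j + d - i).choose d : ℤ) :=
      Finset.sum_congr rfl fun i hi => by rw [hlt i hi]
    rw [this] at hU
    linarith

lemma W0 (d n : ℕ) (h : Polynomial ℤ) (hn : 0 < n) : Wf d n h 0 = h.coeff 0 := by
  rw [Wf, Finset.sum_eq_single 0]
  · simp only [Nat.zero_mul, Nat.le_refl, if_pos, Nat.sub_zero, Nb_zero _ _ hn,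
      Nat.cast_one, mul_one]
  · intro i _ hi0
    rw [Nat.zero_mul, if_neg (by omega), mul_zero]
  · intro habs; exact absurd (by simp) habs

lemma type1 {d n : ℕ} (h : Polynomial ℤ) (hd : 0 < d) (hn : 2*d+2 ≤ n)
    (hpos : ∀ i, 0 ≤ h.coeff i) (h0 : h.coeff 0 = 1) {a : ℕ} (ha : 2*a < d) :
    Wf d n h a < Wf d n h (d - a) := by
  have E1 : (d+1)*(n-1) + (d+1) = (d+1)*n := by
    have h1 : n - 1 + 1 = n := by omega
    calc (d+1)*(n-1) + (d+1) = (d+1)*((n-1)+1) := by ring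
      _ = (d+1)*n := by rw [h1]
  have E6 : d*n + n = (d+1)*n := by ring
  have E2 : a*n + (d-a)*n = d*n := by
    rw [← Nat.add_mul]; congr 1; omega
  have E3 : n ≤ (d-a)*n := Nat.le_mul_of_pos_left n (by omega)
  have E4 : a*n ≤ (d-a)*n := Nat.mul_le_mul_right n (by omega)
  rw [Wf, Wf]
  refine Finset.sum_lt_sum (fun i hi => ?_) ⟨0, Finset.mem_range.mpr (by omega), ?_⟩
  · -- weak per-term
    simp only [Finset.mem_range] at hi
    have hgda : i ≤ (d-a)*n := by omega
    rw [if_pos hgda]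
    by_cases hg : i ≤ a*n
    · rw [if_pos hg]
      refine mul_le_mul_of_nonneg_left ?_ (hpos i)
      refine Nat.cast_le.mpr (mono_w (by omega) ?_)
      omega
    · rw [if_neg hg, mul_zero]
      exact mul_nonneg (hpos i) (Nat.cast_nonneg _)
  · -- strict at i = 0
    rw [if_pos (Nat.zero_le _), if_pos (Nat.zero_le _), Nat.sub_zero, Nat.sub_zero, h0,
      one_mul, one_mul]
    refine Nat.cast_lt.mpr (mono_s (by omega) (by omega) ?_ ?_)
    · exact Nat.mul_lt_mul_of_lt_of_le (by omega) (le_refl n) (by omega)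
    · have h9 : a*n + (d-a)*n = d*n := E2
      omega

lemma type3 {d n : ℕ} (h : Polynomial ℤ) (hd : 0 < d) (hn : 2*d+2 ≤ n)
    (hpos : ∀ i, 0 ≤ h.coeff i) (h0 : h.coeff 0 = 1) :
    Wf d n h ((d+1)/2) < ((2^d * d.factorial + 1 : ℕ) : ℤ) * Wf d n h d := by
  have E1 : (d+1)*(n-1) + (d+1) = (d+1)*n := by
    have h1 : n - 1 + 1 = n := by omega
    calc (d+1)*(n-1) + (d+1) = (d+1)*((n-1)+1) := by ring
      _ = (d+1)*n := by rw [h1]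
  have E6 : d*n + n = (d+1)*n := by ring
  have E7 : d ≤ d*n := Nat.le_mul_of_pos_right d (by omega)
  have E8 : n ≤ d*n := Nat.le_mul_of_pos_left n (by omega)
  set T : ℤ := ∑ i ∈ Finset.range (d+1), h.coeff i with hT
  have hTpos : 1 ≤ T := by
    rw [hT]
    calc (1 : ℤ) = h.coeff 0 := h0.symm
      _ ≤ ∑ i ∈ Finset.range (d+1), h.coeff i :=
          Finset.single_le_sum (fun i _ => hpos i) (Finset.mem_range.mpr (by omega))
  -- upper bound for the middle coefficient
  have hup : Wf d n h ((d+1)/2) ≤ T * (n:ℤ)^d := by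
    rw [Wf, hT, Finset.sum_mul]
    refine Finset.sum_le_sum fun i hi => ?_
    refine mul_le_mul_of_nonneg_left ?_ (hpos i)
    by_cases hg : i ≤ ((d+1)/2)*n
    · rw [if_pos hg]
      calc ((Nb (d+1) n (((d+1)/2)*n - i) : ℕ) : ℤ) ≤ ((n^d : ℕ) : ℤ) :=
            Nat.cast_le.mpr (Nb_le d n _)
        _ = (n:ℤ)^d := by push_cast; ring
    · rw [if_neg hg]
      positivity
  -- lower bound for the top coefficient
  have hlow : T * ((n-1).choose d : ℤ) ≤ Wf d n h d := by
    rw [Wf, hT, Finset.sum_mul]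
    refine Finset.sum_le_sum fun i hi => ?_
    simp only [Finset.mem_range] at hi
    have hg : i ≤ d*n := by omega
    rw [if_pos hg]
    refine mul_le_mul_of_nonneg_left ?_ (hpos i)
    refine Nat.cast_le.mpr ?_
    have hs1 : d*n - i ≤ (d+1)*(n-1) := by omega
    have hsym := Nb_symm (k := d+1) (n := n) (s := d*n - i) hs1
    have harg : (d+1)*(n-1) - (d*n - i) = n - (d+1) + i := by omega
    rw [harg] at hsym
    calc (n-1).choose d = (n - (d+1) + d).choose d := by congr 1; omega
      _ ≤ Nb (d+1) n (n - (d+1)) := Nb_ge (by omega) (by omega)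
      _ ≤ Nb (d+1) n (n - (d+1) + i) := mono_w (by omega) (by omega)
      _ = Nb (d+1) n (d*n - i) := hsym
  -- numeric : n^d ≤ 2^d * d! * choose (n-1) d
  have hnum : (n:ℤ)^d ≤ ((2^d * d.factorial : ℕ) : ℤ) * ((n-1).choose d : ℤ) := by
    have h1 : n^d ≤ 2^d * (n-d)^d := by
      calc n^d ≤ (2*(n-d))^d := Nat.pow_le_pow_left (by omega) d
        _ = 2^d * (n-d)^d := by rw [Nat.mul_pow]
    have h2 : (n-d)^d ≤ (n-1).descFactorial d := by
      have := Nat.pow_sub_le_descFactorial (n-1) d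
      rwa [show n-1+1-d = n-d by omega] at this
    have h3 : (n-1).descFactorial d = d.factorial * (n-1).choose d :=
      Nat.descFactorial_eq_factorial_mul_choose _ _
    have h4 : n^d ≤ 2^d * d.factorial * (n-1).choose d := by
      calc n^d ≤ 2^d * (n-d)^d := h1
        _ ≤ 2^d * ((n-1).descFactorial d) := Nat.mul_le_mul_left _ h2
        _ = 2^d * d.factorial * (n-1).choose d := by rw [h3]; ring
    calc (n:ℤ)^d = ((n^d : ℕ) : ℤ) := by push_cast; ring
      _ ≤ (((2^d * d.factorial) * (n-1).choose d : ℕ) : ℤ) := Nat.cast_le.mpr h4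
      _ = ((2^d * d.factorial : ℕ) : ℤ) * ((n-1).choose d : ℤ) := by push_cast; ring
  have hCpos : (1:ℤ) ≤ ((n-1).choose d : ℤ) := by
    have := Nat.choose_pos (show d ≤ n-1 by omega)
    exact_mod_cast this
  have hWd : 1 ≤ Wf d n h d := by
    calc (1:ℤ) = 1*1 := by ring
      _ ≤ T * ((n-1).choose d : ℤ) := mul_le_mul hTpos hCpos (by norm_num) (by linarith)
      _ ≤ Wf d n h d := hlow
  set K : ℤ := ((2^d * d.factorial : ℕ) : ℤ) with hK
  have hKpos : 0 < K := by
    rw [hK]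
    exact_mod_cast Nat.pos_of_ne_zero (by positivity)
  have hmain : Wf d n h ((d+1)/2) ≤ K * Wf d n h d := by
    calc Wf d n h ((d+1)/2) ≤ T * (n:ℤ)^d := hup
      _ ≤ T * (K * ((n-1).choose d : ℤ)) :=
          mul_le_mul_of_nonneg_left hnum (by linarith)
      _ = K * (T * ((n-1).choose d : ℤ)) := by ring
      _ ≤ K * Wf d n h d := mul_le_mul_of_nonneg_left hlow (by linarith)
  have hfin : ((2^d * d.factorial + 1 : ℕ) : ℤ) = K + 1 := by
    rw [hK]; push_cast; ring
  rw [hfin]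
  nlinarith

/-- Abel summation -/
lemma abel (c M : ℕ → ℤ) (D : ℕ) :
    ∑ i ∈ range (D+1), c i * M i
      = (∑ i ∈ range D, (∑ t ∈ range (i+1), c t) * (M i - M (i+1)))
        + (∑ t ∈ range (D+1), c t) * M D := by
  induction D with
  | zero => simp
  | succ D ih =>
    rw [Finset.sum_range_succ (fun i => c i * M i) (D+1), ih,
      Finset.sum_range_succ (fun i => (∑ t ∈ range (i+1), c t) * (M i - M (i+1))) D,
      Finset.sum_range_succ c (D+1)]
    ring

lemma type2 {d n : ℕ} (h : Polynomial ℤ) (hd : 0 < d) (hn : 2*d+2 ≤ n)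
    (hpos : ∀ i, 0 ≤ h.coeff i) (h0 : h.coeff 0 = 1) (hdeg : h.natDegree ≤ d)
    (hsum : ∀ i : ℕ, i + 1 ≤ d / 2 →
      ∑ j ∈ Finset.Icc (d - i) d, h.coeff j ≤ ∑ j ∈ Finset.range (i + 2), h.coeff j)
    {a : ℕ} (ha : 2*a+1 < d) :
    Wf d n h (d - a) < Wf d n h (a+1) := by
  have E1 : (d+1)*(n-1) + (d+1) = (d+1)*n := by
    have h1 : n - 1 + 1 = n := by omega
    calc (d+1)*(n-1) + (d+1) = (d+1)*((n-1)+1) := by ring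
      _ = (d+1)*n := by rw [h1]
  have E6 : d*n + n = (d+1)*n := by ring
  have Eb : n ≤ (a+1)*n := Nat.le_mul_of_pos_left n (by omega)
  have E2b : (a+1)*n + (a+1)*n ≤ d*n := by
    have h1 : (2*(a+1))*n ≤ d*n := Nat.mul_le_mul_right n (by omega)
    have h2 : (a+1)*n + (a+1)*n = (2*(a+1))*n := by ring
    omega
  have Eda : (a+1)*n + (d-a)*n = (d+1)*n := by
    rw [← Nat.add_mul]; congr 1; omega
  have Eda2 : (d-a)*n ≤ d*n := Nat.mul_le_mul_right n (by omega)
  have End : n ≤ (d-a)*n := Nat.le_mul_of_pos_left n (by omega)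
  have hd1 : h.coeff (d+1) = 0 := coeff_eq_zero_of_natDegree_lt (by omega)
  -- abbreviations (explicit everywhere)
  -- hW1
  have hW1 : Wf d n h (a+1)
      = ∑ i ∈ range (d+2), h.coeff i * (Nb (d+1) n ((a+1)*n - i) : ℤ) := by
    rw [Wf, Finset.sum_range_succ (fun i => h.coeff i * (Nb (d+1) n ((a+1)*n - i) : ℤ)) (d+1),
      hd1]
    simp only [zero_mul, add_zero]
    refine Finset.sum_congr rfl fun i hi => ?_
    simp only [Finset.mem_range] at hi
    rw [if_pos (by omega)]
  -- hW2
  have hW2 : Wf d n h (d - a)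
      = ∑ i ∈ range (d+2), h.coeff (d+1-i) * (Nb (d+1) n ((a+1)*n - i) : ℤ) := by
    rw [Wf]
    have step1 : ∀ i ∈ range (d+1),
        h.coeff i * (if i ≤ (d-a)*n then (Nb (d+1) n ((d-a)*n - i) : ℤ) else 0)
          = h.coeff i * (Nb (d+1) n ((a+1)*n - (d+1-i)) : ℤ) := by
      intro i hi
      simp only [Finset.mem_range] at hi
      rw [if_pos (by omega)]
      congr 2
      have hs1 : (d-a)*n - i ≤ (d+1)*(n-1) := by omega
      have hsym := Nb_symm (k := d+1) (n := n) (s := (d-a)*n - i) hs1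
      have harg : (d+1)*(n-1) - ((d-a)*n - i) = (a+1)*n - (d+1-i) := by omega
      rw [harg] at hsym
      exact hsym.symm
    rw [Finset.sum_congr rfl step1]
    have hrefl := Finset.sum_range_reflect
      (fun i => h.coeff i * (Nb (d+1) n ((a+1)*n - (d+1-i)) : ℤ)) (d+1)
    rw [← hrefl]
    have step2 : ∀ j ∈ range (d+1),
        h.coeff (d+1-1-j) * (Nb (d+1) n ((a+1)*n - (d+1-(d+1-1-j))) : ℤ)
          = h.coeff (d-j) * (Nb (d+1) n ((a+1)*n - (j+1)) : ℤ) := by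
      intro j hj
      simp only [Finset.mem_range] at hj
      have e1 : d+1-1-j = d-j := by omega
      have e2 : d+1-(d-j) = j+1 := by omega
      rw [e1, e2]
    rw [Finset.sum_congr rfl step2]
    rw [Finset.sum_range_succ' (fun i => h.coeff (d+1-i) * (Nb (d+1) n ((a+1)*n - i) : ℤ)) (d+1)]
    have e3 : d + 1 - 0 = d+1 := rfl
    rw [e3, hd1, zero_mul, add_zero]
    refine Finset.sum_congr rfl fun j hj => ?_
    simp only [Finset.mem_range] at hj
    have e4 : d+1-(j+1) = d-j := by omega
    rw [e4]
  -- the difference as a single sum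
  have hdiff : Wf d n h (a+1) - Wf d n h (d - a)
      = ∑ i ∈ range (d+2),
          (h.coeff i - h.coeff (d+1-i)) * (Nb (d+1) n ((a+1)*n - i) : ℤ) := by
    rw [hW1, hW2, ← Finset.sum_sub_distrib]
    exact Finset.sum_congr rfl fun i _ => by ring
  -- abel
  have H := abel (fun i => h.coeff i - h.coeff (d+1-i))
    (fun i => (Nb (d+1) n ((a+1)*n - i) : ℤ)) (d+1)
  -- S (d+1) = 0
  have hSd : (∑ t ∈ range (d+1+1), (h.coeff t - h.coeff (d+1-t))) = 0 := by
    rw [Finset.sum_sub_distrib]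
    have hrefl := Finset.sum_range_reflect (fun t => h.coeff t) (d+2)
    have step : ∀ t ∈ range (d+2), h.coeff (d+2-1-t) = h.coeff (d+1-t) := by
      intro t ht
      congr 1
    rw [Finset.sum_congr rfl step] at hrefl
    rw [hrefl, sub_self]
  -- representation A of partial sums
  have repA : ∀ i, i ≤ d →
      (∑ t ∈ range (i+1), (h.coeff t - h.coeff (d+1-t)))
        = (∑ t ∈ range (i+1), h.coeff t) - (∑ j ∈ Finset.Icc (d+1-i) d, h.coeff j) := by
    intro i hi
    rw [Finset.sum_sub_distrib]
    congr 1
    -- ∑_{t ≤ i} h_{d+1-t} = ∑_{j ∈ Icc (d+1-i) (d+1)} h_j = ∑_{Icc (d+1-i) d} + h_{d+1}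
    have hbij : (∑ t ∈ range (i+1), h.coeff (d+1-t))
        = ∑ j ∈ Finset.Icc (d+1-i) (d+1), h.coeff j := by
      refine Finset.sum_nbij' (fun t => d+1-t) (fun j => d+1-j) ?_ ?_ ?_ ?_ ?_
      · intro t ht
        simp only [Finset.mem_range] at ht
        simp only [Finset.mem_Icc]
        omega
      · intro j hj
        simp only [Finset.mem_Icc] at hj
        simp only [Finset.mem_range]
        omega
      · intro t ht
        simp only [Finset.mem_range] at ht
        omega
      · intro j hj
        simp only [Finset.mem_Icc] at hj
        omega
      · intro t ht
        rfl
    rw [hbij, ← Finset.Ico_add_one_right_eq_Icc, Finset.sum_Ico_succ_top (by omega), hd1, add_zero,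
      Finset.Ico_add_one_right_eq_Icc]
  -- representation B
  have repB : ∀ i, i ≤ d →
      (∑ t ∈ range (i+1), (h.coeff t - h.coeff (d+1-t)))
        = (∑ t ∈ range (i+1), h.coeff t) + (∑ t ∈ range (d-i+1), h.coeff t)
            - (∑ t ∈ range (d+1), h.coeff t) := by
    intro i hi
    rw [repA i hi]
    have hIco : (∑ j ∈ Finset.Icc (d+1-i) d, h.coeff j)
        = (∑ t ∈ range (d+1), h.coeff t) - (∑ t ∈ range (d-i+1), h.coeff t) := by
      rw [← Finset.Ico_add_one_right_eq_Icc,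
        Finset.sum_Ico_eq_sub (fun j => h.coeff j) (by omega : d+1-i ≤ d+1)]
      have e5 : d+1-i = d-i+1 := by omega
      rw [e5]
    rw [hIco]
    ring
  -- nonnegativity of partial sums
  have hSnnHalf : ∀ i, i ≤ d/2 →
      0 ≤ ∑ t ∈ range (i+1), (h.coeff t - h.coeff (d+1-t)) := by
    intro i hi
    rcases Nat.eq_zero_or_pos i with h_0 | hip
    · subst h_0
      rw [Finset.sum_range_one, h0]
      have e6 : d + 1 - 0 = d + 1 := rfl
      rw [e6, hd1]
      norm_num
    · rw [repA i (by omega)]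
      have hs := hsum (i-1) (by omega)
      have e7 : d - (i-1) = d+1-i := by omega
      have e8 : i - 1 + 2 = i + 1 := by omega
      rw [e7, e8] at hs
      linarith
  have hSnn : ∀ i, i ≤ d →
      0 ≤ ∑ t ∈ range (i+1), (h.coeff t - h.coeff (d+1-t)) := by
    intro i hi
    rcases le_or_gt i (d/2) with hc | hc
    · exact hSnnHalf i hc
    · have hsym : (∑ t ∈ range (i+1), (h.coeff t - h.coeff (d+1-t)))
          = ∑ t ∈ range ((d-i)+1), (h.coeff t - h.coeff (d+1-t)) := by
        rw [repB i hi, repB (d-i) (by omega)]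
        have e9 : d - (d-i) + 1 = i + 1 := by omega
        rw [e9]
        ring
      rw [hsym]
      exact hSnnHalf (d-i) (by omega)
  -- monotonicity facts
  have hMle : ∀ i ∈ range (d+1),
      (Nb (d+1) n ((a+1)*n - (i+1)) : ℤ) ≤ (Nb (d+1) n ((a+1)*n - i) : ℤ) := by
    intro i hi
    simp only [Finset.mem_range] at hi
    exact Nat.cast_le.mpr (mono_w (by omega) (by omega))
  have hM01 : (Nb (d+1) n ((a+1)*n - 1) : ℤ) < (Nb (d+1) n ((a+1)*n - 0) : ℤ) := by
    refine Nat.cast_lt.mpr (mono_s (by omega) (by omega) (by omega) ?_)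
    omega
  -- positivity of the abel sum
  have hposSum : 0 < ∑ i ∈ range (d+1),
      (∑ t ∈ range (i+1), (h.coeff t - h.coeff (d+1-t)))
        * ((Nb (d+1) n ((a+1)*n - i) : ℤ) - (Nb (d+1) n ((a+1)*n - (i+1)) : ℤ)) := by
    refine Finset.sum_pos' (fun i hi => ?_) ⟨0, Finset.mem_range.mpr (by omega), ?_⟩
    · have hi' := Finset.mem_range.mp hi
      refine mul_nonneg (hSnn i (by omega)) ?_
      have := hMle i hi
      linarith
    · rw [Finset.sum_range_one]
      have e11 : d + 1 - 0 = d + 1 := rfl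
      rw [e11, h0, hd1, sub_zero]
      have h12 := hM01
      nlinarith [hM01]
  -- conclude
  have e10 : d+1+1 = d+2 := rfl
  rw [e10] at H hSd
  rw [hSd, zero_mul, add_zero] at H
  linarith [hposSum, hdiff, H]

theorem stmt4 (d : ℕ) (hd : 0 < d) :
    ∃ md nd : ℕ, 0 < md ∧ 0 < nd ∧
      ∀ (h Uh : Polynomial ℤ) (n : ℕ),
        h.natDegree ≤ d → (∀ i, 0 ≤ h.coeff i) → h.coeff 0 = 1 →
        -- h_0 + ⋯ + h_{i+1} ≥ h_d + ⋯ + h_{d-i} for 0 ≤ i ≤ ⌊d/2⌋ - 1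
        (∀ i : ℕ, i + 1 ≤ d / 2 →
          ∑ j ∈ Finset.Icc (d - i) d, h.coeff j ≤ ∑ j ∈ Finset.range (i + 2), h.coeff j) →
        Uh.natDegree ≤ d → (∀ m : ℕ, ehrG d Uh m = ehrG d h (n * m)) →
        nd ≤ n →
        -- h_0 = h_0(n) < h_d(n) < h_1(n) < h_{d-1}(n) < ⋯ < h_{⌊(d+1)/2⌋}(n) < m_d h_d(n)
        Uh.coeff 0 = h.coeff 0 ∧
        (∀ k, k < d → Uh.coeff (chainIdx d k) < Uh.coeff (chainIdx d (k + 1))) ∧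
        Uh.coeff ((d + 1) / 2) < (md : ℤ) * Uh.coeff d := by
  refine ⟨2^d * d.factorial + 1, 2*d + 2, by positivity, by omega, ?_⟩
  intro h Uh n hdeg hpos h0 hsum hUdeg heq hn
  have hn2 : d + 2 ≤ n := by omega
  have hb := bridge d n h Uh hn2 heq
  refine ⟨?_, ?_, ?_⟩
  · rw [hb 0 (by omega), W0 d n h (by omega)]
  · intro k hk
    rcases Nat.even_or_odd k with ⟨a, hae⟩ | ⟨a, hao⟩
    · -- k = 2a
      have hc1 : chainIdx d k = a := by
        rw [chainIdx, if_pos (by omega)]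
        omega
      have hc2 : chainIdx d (k+1) = d - a := by
        rw [chainIdx, if_neg (by omega)]
        congr 1
        omega
      rw [hc1, hc2, hb a (by omega), hb (d-a) (by omega)]
      exact type1 h hd hn hpos h0 (by omega)
    · -- k = 2a+1
      have hc1 : chainIdx d k = d - a := by
        rw [chainIdx, if_neg (by omega)]
        congr 1
        omega
      have hc2 : chainIdx d (k+1) = a+1 := by
        rw [chainIdx, if_pos (by omega)]
        omega
      rw [hc1, hc2, hb (d-a) (by omega), hb (a+1) (by omega)]
      exact type2 h hd hn hpos h0 hdeg hsum (by omega)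
  · rw [hb ((d+1)/2) (by omega), hb d (by omega)]
    exact_mod_cast type3 h hd hn hpos h0
end

section
/- Fix a positive integer d. Every polynomial h(t) = h_0 + h_1 t + ⋯ + h_{d+1} t^{d+1} with integer coefficients has a unique decomposition h(t) = a(t) + b(t), where a(t) and b(t) are polynomials with integer coefficients of degree at most d and at most d+1 respectively, satisfying a(t) = t^d · a(1/t) and b(t) = t^{d+1} · b(1/t); equivalently, writing a(t) = ∑_{i=0}^{d} a_i t^i and b(t) = ∑_{i=0}^{d+1} b_i t^i, one has a_i = a_{d−i} for 0 ≤ i ≤ d and b_i = b_{d+1−i} for 0 ≤ i ≤ d+1. -/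
open Polynomial

private lemma aux_Ico_zero (d : ℕ) (h : Polynomial ℤ) {m n : ℕ} (hmn : m + n = d) (hle : m ≤ n) :
    ∑ j ∈ Finset.Ico (m+1) (n+1), (h.coeff j - h.coeff (d+1-j)) = 0 := by
  refine Finset.sum_involution (fun j _ => d + 1 - j) ?_ ?_ ?_ ?_
  · intro j hj
    simp only [Finset.mem_Ico] at hj
    have : d + 1 - (d + 1 - j) = j := by omega
    rw [this]; ring
  · intro j hj hne
    simp only [Finset.mem_Ico] at hj
    intro hcon
    apply hne
    have : j = d + 1 - j := hcon.symm
    rw [← this]; ring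
  · intro j hj
    simp only [Finset.mem_Ico] at hj ⊢
    omega
  · intro j hj
    simp only [Finset.mem_Ico] at hj
    show d + 1 - (d + 1 - j) = j
    omega

private lemma aux_sym (d : ℕ) (h : Polynomial ℤ) {m n : ℕ} (hmn : m + n = d) :
    (∑ j ∈ Finset.range (m+1), (h.coeff j - h.coeff (d+1-j)))
      = ∑ j ∈ Finset.range (n+1), (h.coeff j - h.coeff (d+1-j)) := by
  rcases le_total m n with hle | hle
  · have h1 : m + 1 ≤ n + 1 := by omega
    have := Finset.sum_Ico_eq_sub (f := fun j => (h.coeff j - h.coeff (d+1-j))) h1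
    have h0 := aux_Ico_zero d h hmn hle
    rw [h0] at this
    linarith [this]
  · have h1 : n + 1 ≤ m + 1 := by omega
    have hmn' : n + m = d := by omega
    have := Finset.sum_Ico_eq_sub (f := fun j => (h.coeff j - h.coeff (d+1-j))) h1
    have h0 := aux_Ico_zero d h hmn' hle
    rw [h0] at this
    linarith [this]

theorem stmt8 (d : ℕ) (hd : 0 < d) (h : Polynomial ℤ) (hdeg : h.natDegree ≤ d + 1) :
    ∃! ab : Polynomial ℤ × Polynomial ℤ,
      h = ab.1 + ab.2 ∧
      ab.1.natDegree ≤ d ∧ ab.2.natDegree ≤ d + 1 ∧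
      (∀ i ≤ d, ab.1.coeff i = ab.1.coeff (d - i)) ∧
      (∀ i ≤ d + 1, ab.2.coeff i = ab.2.coeff (d + 1 - i)) := by
  set f : ℕ → ℤ := fun i => ∑ j ∈ Finset.range (i+1), (h.coeff j - h.coeff (d+1-j)) with hf
  set a : Polynomial ℤ := ∑ i ∈ Finset.range (d+1), Polynomial.C (f i) * Polynomial.X ^ i
    with ha
  have hacoeff : ∀ k, a.coeff k = if k < d + 1 then f k else 0 := by
    intro k
    rw [ha, Polynomial.finset_sum_coeff]
    simp only [Polynomial.coeff_C_mul, Polynomial.coeff_X_pow, mul_ite, mul_one, mul_zero]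
    rw [Finset.sum_ite_eq (Finset.range (d+1)) k f]
    simp [Finset.mem_range]
  have hadeg : a.natDegree ≤ d := by
    rw [Polynomial.natDegree_le_iff_coeff_eq_zero]
    intro k hk
    rw [hacoeff k, if_neg (by omega)]
  set b : Polynomial ℤ := h - a with hb
  have hsum : h = a + b := by rw [hb]; ring
  have hbdeg : b.natDegree ≤ d + 1 := by
    refine le_trans (Polynomial.natDegree_sub_le h a) ?_
    exact max_le hdeg (by omega)
  have hasym : ∀ i ≤ d, a.coeff i = a.coeff (d - i) := by
    intro i hi
    rw [hacoeff, hacoeff, if_pos (by omega), if_pos (by omega)]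
    exact aux_sym d h (by omega)
  have hbsym : ∀ i ≤ d + 1, b.coeff i = b.coeff (d + 1 - i) := by
    intro i hi
    rw [hb]
    simp only [Polynomial.coeff_sub]
    rcases Nat.eq_zero_or_pos i with rfl | hipos
    · rw [hacoeff, hacoeff, if_pos (by omega), if_neg (by omega)]
      have : f 0 = h.coeff 0 - h.coeff (d+1) := by
        rw [hf]; simp
      simp only [Nat.sub_zero, this]; ring
    · rcases Nat.lt_or_ge i (d+1) with hilt | hige
      · -- 1 ≤ i ≤ d
        rw [hacoeff, hacoeff, if_pos (by omega), if_pos (by omega)]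
        have h1 : f (d + 1 - i) = f (i - 1) := aux_sym d h (by omega)
        have h2 : f i = f (i - 1) + (h.coeff i - h.coeff (d + 1 - i)) := by
          rw [hf]
          simp only []
          have : i - 1 + 1 = i := by omega
          rw [← this, Finset.sum_range_succ]
          have h3 : i - 1 + 1 - 1 + 1 = i - 1 + 1 := by omega
          rw [h3]
        rw [h1, h2]
        ring
      · -- i = d + 1
        have : i = d + 1 := by omega
        subst this
        rw [hacoeff, hacoeff, if_neg (by omega), if_pos (by omega)]
        have : f 0 = h.coeff 0 - h.coeff (d+1) := by rw [hf]; simp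
        simp only [Nat.sub_self, this]; ring
  refine ⟨(a, b), ⟨hsum, hadeg, hbdeg, hasym, hbsym⟩, ?_⟩
  -- uniqueness
  rintro ⟨a', b'⟩ ⟨heq', hadeg', hbdeg', hasym', hbsym'⟩
  have key : ∀ (a₁ b₁ a₂ b₂ : Polynomial ℤ),
      h = a₁ + b₁ → a₁.natDegree ≤ d → b₁.natDegree ≤ d + 1 →
      (∀ i ≤ d, a₁.coeff i = a₁.coeff (d - i)) →
      (∀ i ≤ d + 1, b₁.coeff i = b₁.coeff (d + 1 - i)) →
      h = a₂ + b₂ → a₂.natDegree ≤ d → b₂.natDegree ≤ d + 1 →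
      (∀ i ≤ d, a₂.coeff i = a₂.coeff (d - i)) →
      (∀ i ≤ d + 1, b₂.coeff i = b₂.coeff (d + 1 - i)) →
      a₁ = a₂ := by
    intro a₁ b₁ a₂ b₂ he1 hd1 hD1 hs1 hS1 he2 hd2 hD2 hs2 hS2
    set c : Polynomial ℤ := a₁ - a₂ with hc
    have hcb : c = b₂ - b₁ := by
      rw [hc]
      have : a₁ + b₁ = a₂ + b₂ := by rw [← he1, ← he2]
      linear_combination this
    have hcdeg : c.natDegree ≤ d := le_trans (Polynomial.natDegree_sub_le a₁ a₂) (max_le hd1 hd2)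
    have hcsym1 : ∀ i ≤ d, c.coeff i = c.coeff (d - i) := by
      intro i hi
      rw [hc]
      simp only [Polynomial.coeff_sub, hs1 i hi, hs2 i hi]
    have hcsym2 : ∀ i ≤ d + 1, c.coeff i = c.coeff (d + 1 - i) := by
      intro i hi
      rw [hcb]
      simp only [Polynomial.coeff_sub, hS1 i hi, hS2 i hi]
    have hstep : ∀ i ≤ d, c.coeff i = c.coeff (i + 1) := by
      intro i hi
      rw [hcsym1 i hi]
      have h2 := hcsym2 (d - i) (by omega)
      have : d + 1 - (d - i) = i + 1 := by omega
      rw [this] at h2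
      exact h2
    have hc0 : c.coeff 0 = 0 := by
      have h2 := hcsym2 0 (by omega)
      simp only [Nat.sub_zero] at h2
      rw [h2]
      exact Polynomial.coeff_eq_zero_of_natDegree_lt (by omega)
    have hcall : ∀ i, c.coeff i = 0 := by
      intro i
      rcases Nat.lt_or_ge i (d + 2) with hilt | hige
      · induction i with
        | zero => exact hc0
        | succ n ih =>
          have hn : n ≤ d := by omega
          rw [← hstep n hn]
          exact ih (by omega)
      · exact Polynomial.coeff_eq_zero_of_natDegree_lt (by omega)
    have : c = 0 := by
      ext n
      simp [hcall n]
    rw [hc] at this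
    linear_combination this
  have haeq : a' = a := key a' b' a b heq' hadeg' hbdeg' hasym' hbsym'
    hsum hadeg hbdeg hasym hbsym
  have hbeq : b' = b := by
    have : a' + b' = a + b := by rw [← heq', ← hsum]
    rw [haeq] at this
    linear_combination this
  exact Prod.ext haeq hbeq
end

section
/- With the notation of the context, g_d ≥ 1/d!. Furthermore, if h_0 + h_1 + ⋯ + h_i ≥ h_{d+1} + h_d + ⋯ + h_{d+1−i} for all 0 ≤ i ≤ ⌊d/2⌋, with at least one of these inequalities strict, then g_{d−1} ≥ 1/(2·(d−1)!). -/
open Polynomial Finset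

-- descending factorial as a rational product
lemma prod_cast_descFactorial (n e : ℕ) :
    ∏ k ∈ Finset.range e, ((n : ℚ) - k) = (n.descFactorial e : ℚ) := by
  induction e with
  | zero => simp
  | succ e ih =>
    rw [Finset.prod_range_succ, ih, Nat.descFactorial_succ]
    rcases le_or_gt e n with he | he
    · push_cast [Nat.cast_sub he]; ring
    · rw [Nat.descFactorial_eq_zero_iff_lt.2 he]
      push_cast; ring

-- Abel-type lower bound on the key integer sum
lemma key_sum_ge_one (d : ℕ) (H : ℕ → ℤ)
    (hA : ∀ i ≤ d / 2,
      ∑ j ∈ Finset.Icc (d + 1 - i) (d + 1), H j ≤ ∑ j ∈ Finset.range (i + 1), H j)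
    (hE : ∃ i ≤ d / 2,
      ∑ j ∈ Finset.Icc (d + 1 - i) (d + 1), H j < ∑ j ∈ Finset.range (i + 1), H j) :
    1 ≤ ∑ i ∈ Finset.range (d + 2), ((d : ℤ) + 1 - 2 * i) * H i := by
  set U : ℕ → ℤ := fun j => ∑ k ∈ Finset.range (j + 1), H k with hU
  -- split lemma : U (d+1) = U (d - t) + Icc-sum, for t ≤ d
  have hsplit : ∀ t ≤ d, U (d + 1) = U (d - t) + ∑ j ∈ Finset.Icc (d + 1 - t) (d + 1), H j := by
    intro t ht
    have h1 : d - t + 1 = d + 1 - t := by omega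
    have h3 : Finset.Icc (d + 1 - t) (d + 1) = Finset.Ico (d - t + 1) (d + 2) := by
      rw [show d + 2 = d + 1 + 1 from rfl, Finset.Ico_add_one_right_eq_Icc, h1]
    show ∑ k ∈ Finset.range (d + 1 + 1), H k
      = ∑ k ∈ Finset.range (d - t + 1), H k + ∑ j ∈ Finset.Icc (d + 1 - t) (d + 1), H j
    rw [h3, Finset.range_eq_Ico, Finset.range_eq_Ico]
    exact (Finset.sum_Ico_consecutive H (m := 0) (n := d - t + 1) (k := d + 2) (by omega) (by omega)).symm
  -- pointwise bound
  have hpt : ∀ j ∈ Finset.range (d + 1), U (d + 1) ≤ U j + U (d - j) := by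
    intro j hj
    simp only [Finset.mem_range] at hj
    set t := min j (d - j) with htdef
    have ht : t ≤ d / 2 := by omega
    have htd : t ≤ d := by omega
    have hswap : U j + U (d - j) = U t + U (d - t) := by
      rcases le_or_gt j (d - j) with hc | hc
      · have h1 : t = j := by omega
        rw [h1]
      · have h1 : t = d - j := by omega
        have h3 : d - (d - j) = j := by omega
        rw [h1, h3]; ring
    rw [hswap, hsplit t htd]
    have hA' := hA t ht
    have hUt : ∑ j ∈ Finset.range (t + 1), H j = U t := rfl
    linarith
  obtain ⟨i0, hi0, hstrict⟩ := hE
  have hi0d : i0 ≤ d := by omega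
  have hpt0 : U (d + 1) < U i0 + U (d - i0) := by
    rw [hsplit i0 hi0d]
    have hUt : ∑ j ∈ Finset.range (i0 + 1), H j = U i0 := rfl
    linarith
  -- sum of the pointwise bounds, strict
  have hsum : ∑ j ∈ Finset.range (d + 1), U (d + 1) <
      ∑ j ∈ Finset.range (d + 1), (U j + U (d - j)) := by
    apply Finset.sum_lt_sum hpt ⟨i0, Finset.mem_range.2 (by omega), hpt0⟩
  rw [Finset.sum_const, Finset.card_range] at hsum
  have hrefl : ∑ j ∈ Finset.range (d + 1), U (d - j) = ∑ j ∈ Finset.range (d + 1), U j := by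
    have := Finset.sum_range_reflect (fun j => U j) (d + 1)
    simpa using this
  rw [Finset.sum_add_distrib, hrefl] at hsum
  -- Abel summation
  have habel := Finset.sum_range_by_parts (fun i => (d : ℤ) + 1 - 2 * i) H (d + 2)
  simp only [smul_eq_mul] at habel
  have hS : ∑ i ∈ Finset.range (d + 2), ((d : ℤ) + 1 - 2 * i) * H i
      = 2 * (∑ i ∈ Finset.range (d + 1), U i) - ((d : ℤ) + 1) * U (d + 1) := by
    rw [habel]
    have hn : d + 2 - 1 = d + 1 := rfl
    rw [hn]
    have hg2 : (∑ j ∈ Finset.range (d + 2), H j) = U (d + 1) := rfl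
    rw [hg2]
    have h2 : ∑ i ∈ Finset.range (d + 1),
        (((d : ℤ) + 1 - 2 * (i + 1 : ℕ)) - ((d : ℤ) + 1 - 2 * i)) * ∑ j ∈ Finset.range (i + 1), H j
        = ∑ i ∈ Finset.range (d + 1), (-2) * U i := by
      apply Finset.sum_congr rfl
      intro i _
      have : U i = ∑ j ∈ Finset.range (i + 1), H j := rfl
      rw [this]
      push_cast
      ring
    rw [h2, ← Finset.mul_sum]
    push_cast
    ring
  rw [hS]
  simp only [nsmul_eq_mul] at hsum
  push_cast at hsum
  linarith

theorem stmt10 (d : ℕ) (hd : 0 < d)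
    (h : Polynomial ℤ) (hne : h ≠ 0) (hdeg : h.natDegree ≤ d + 1)
    (g : Polynomial ℚ)
    -- g(m) = ∑_{i=0}^{d+1} h_i C(m+d-i, d), valid for all integers m ≥ 1
    (hg : ∀ m : ℕ, 1 ≤ m → g.eval (m : ℚ) =
      ∑ i ∈ Finset.range (d + 2), (h.coeff i : ℚ) * ((m + d - i).choose d : ℚ))
    (hgd : 0 < g.coeff d) :
    (1 : ℚ) / (Nat.factorial d : ℚ) ≤ g.coeff d ∧
    ((∀ i ≤ d / 2,
        ∑ j ∈ Finset.Icc (d + 1 - i) (d + 1), h.coeff j ≤ ∑ j ∈ Finset.range (i + 1), h.coeff j) →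
      (∃ i ≤ d / 2,
        ∑ j ∈ Finset.Icc (d + 1 - i) (d + 1), h.coeff j < ∑ j ∈ Finset.range (i + 1), h.coeff j) →
      (1 : ℚ) / (2 * (Nat.factorial (d - 1) : ℚ)) ≤ g.coeff (d - 1)) := by
  classical
  have hfacpos : (0:ℚ) < (d.factorial : ℚ) := by exact_mod_cast d.factorial_pos
  set P : ℕ → Polynomial ℚ := fun i => ∏ k ∈ Finset.range d, (X + C ((d:ℚ) - i - k)) with hP
  set q : Polynomial ℚ :=
    C ((d.factorial : ℚ)⁻¹) * ∑ i ∈ Finset.range (d+2), C ((h.coeff i : ℚ)) * P i with hq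
  have hPmonic : ∀ i, (P i).Monic := fun i =>
    monic_prod_of_monic _ _ fun k _ => monic_X_add_C _
  have hPdeg : ∀ i, (P i).natDegree = d := by
    intro i
    rw [hP]
    rw [Polynomial.natDegree_prod_of_monic _ _ fun k _ => monic_X_add_C _]
    have h1 : ∑ k ∈ Finset.range d, (X + C ((d:ℚ) - i - k)).natDegree
        = ∑ k ∈ Finset.range d, 1 :=
      Finset.sum_congr rfl fun k _ => natDegree_X_add_C _
    rw [h1]; simp
  have hPd : ∀ i, (P i).coeff d = 1 := by
    intro i
    have := (hPmonic i).coeff_natDegree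
    rwa [hPdeg i] at this
  have hPd1 : ∀ i : ℕ, (P i).coeff (d-1) = ∑ k ∈ Finset.range d, ((d:ℚ) - i - k) := by
    intro i
    have h1 : (P i).coeff (d-1) = (P i).nextCoeff := by
      rw [nextCoeff_of_natDegree_pos (by rw [hPdeg i]; exact hd), hPdeg i]
    rw [h1, hP]
    rw [Monic.nextCoeff_prod _ _ fun k _ => monic_X_add_C _]
    exact Finset.sum_congr rfl fun k _ => nextCoeff_X_add_C _
  have hevalP : ∀ (m : ℕ), 1 ≤ m → ∀ i ∈ Finset.range (d+2),
      (P i).eval (m:ℚ) = (d.factorial : ℚ) * (((m + d - i).choose d : ℕ) : ℚ) := by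
    intro m hm i hi
    simp only [Finset.mem_range] at hi
    have hle : i ≤ m + d := by omega
    have hcast : ((m + d - i : ℕ) : ℚ) = (m:ℚ) + d - i := by
      rw [Nat.cast_sub hle]; push_cast; ring
    rw [hP]
    simp only [eval_prod, eval_add, eval_X, eval_C]
    have hterm : ∀ k ∈ Finset.range d, (m:ℚ) + ((d:ℚ) - i - k) = ((m + d - i : ℕ):ℚ) - k := by
      intro k _; rw [hcast]; ring
    rw [Finset.prod_congr rfl hterm, prod_cast_descFactorial,
      Nat.descFactorial_eq_factorial_mul_choose]
    push_cast; ring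
  have heval : ∀ m : ℕ, 1 ≤ m → q.eval (m:ℚ) = g.eval (m:ℚ) := by
    intro m hm
    rw [hg m hm, hq]
    simp only [eval_mul, eval_C, eval_finset_sum]
    rw [Finset.mul_sum]
    apply Finset.sum_congr rfl
    intro i hi
    rw [hevalP m hm i hi]
    field_simp
  have hgq : g = q := by
    apply Polynomial.eq_of_infinite_eval_eq
    refine Set.infinite_of_injective_forall_mem (f := fun n : ℕ => ((n + 1 : ℕ) : ℚ)) ?_ ?_
    · intro a b hab; simpa using hab
    · intro n
      simp only [Set.mem_setOf_eq]
      exact (heval (n+1) (by omega)).symm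
  have hqd : g.coeff d = (d.factorial:ℚ)⁻¹ * ∑ i ∈ Finset.range (d+2), (h.coeff i : ℚ) := by
    rw [hgq, hq, coeff_C_mul, finset_sum_coeff]
    congr 1
    exact Finset.sum_congr rfl fun i _ => by rw [coeff_C_mul, hPd i, mul_one]
  have hqd1 : g.coeff (d-1) = (d.factorial:ℚ)⁻¹ *
      ∑ i ∈ Finset.range (d+2), (h.coeff i : ℚ) * ∑ k ∈ Finset.range d, ((d:ℚ) - i - k) := by
    rw [hgq, hq, coeff_C_mul, finset_sum_coeff]
    congr 1
    exact Finset.sum_congr rfl fun i _ => by rw [coeff_C_mul, hPd1 i]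
  set Sz : ℤ := ∑ i ∈ Finset.range (d+2), h.coeff i with hSz
  have hcastS : ∑ i ∈ Finset.range (d+2), (h.coeff i : ℚ) = (Sz : ℚ) := by
    rw [hSz]; push_cast; rfl
  have hSpos : 0 < Sz := by
    rw [hqd, hcastS] at hgd
    by_contra hc
    push_neg at hc
    have h1 : (Sz:ℚ) ≤ 0 := by exact_mod_cast hc
    nlinarith [inv_pos.2 hfacpos]
  have hS1 : (1:ℚ) ≤ (Sz:ℚ) := by exact_mod_cast hSpos
  constructor
  · rw [hqd, hcastS, one_div]
    nlinarith [mul_le_mul_of_nonneg_left hS1 (le_of_lt (inv_pos.2 hfacpos))]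
  · intro hAq hEq
    have hS1' : 1 ≤ ∑ i ∈ Finset.range (d + 2), ((d : ℤ) + 1 - 2 * i) * h.coeff i :=
      key_sum_ge_one d (fun i => h.coeff i) hAq hEq
    have hgauss : (∑ k ∈ Finset.range d, (k:ℚ)) = (d:ℚ) * ((d:ℚ) - 1) / 2 := by
      have h2 := congrArg (fun n : ℕ => (n : ℚ)) (Finset.sum_range_id_mul_two d)
      push_cast [Nat.cast_sub (show 1 ≤ d from hd)] at h2
      linarith
    have hsum2 : ∀ i : ℕ, ∑ k ∈ Finset.range d, ((d:ℚ) - i - k)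
        = (d:ℚ) * ((d:ℚ) + 1 - 2*i) / 2 := by
      intro i
      rw [Finset.sum_sub_distrib, Finset.sum_sub_distrib, hgauss, Finset.sum_const,
        Finset.sum_const, Finset.card_range, nsmul_eq_mul]
      ring
    have hmid : ∑ i ∈ Finset.range (d+2), (h.coeff i : ℚ) * ∑ k ∈ Finset.range d, ((d:ℚ) - i - k)
        = (d:ℚ) / 2 * ((∑ i ∈ Finset.range (d + 2), ((d : ℤ) + 1 - 2 * i) * h.coeff i : ℤ) : ℚ) := by
      push_cast
      rw [Finset.mul_sum]
      apply Finset.sum_congr rfl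
      intro i _
      rw [hsum2 i]
      ring
    have hfd : (d:ℚ) * ((d-1).factorial : ℚ) = (d.factorial : ℚ) := by
      exact_mod_cast congrArg (fun n : ℕ => (n:ℚ)) (Nat.mul_factorial_pred hd.ne')
    have hdm1pos : (0:ℚ) < ((d-1).factorial : ℚ) := by exact_mod_cast (d-1).factorial_pos
    have hd0 : (d:ℚ) ≠ 0 := by positivity
    have hcoeff1 : g.coeff (d-1)
        = ((∑ i ∈ Finset.range (d + 2), ((d : ℤ) + 1 - 2 * i) * h.coeff i : ℤ) : ℚ)
          / (2 * ((d-1).factorial : ℚ)) := by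
      rw [hqd1, hmid, ← hfd]
      field_simp
    rw [hcoeff1]
    gcongr
    exact_mod_cast hS1'
end

section
/- For every polynomial h(t) of degree at most d with integer coefficients and every positive integer n, U_n h(t) = E_n( h(t) · (1 + t + ⋯ + t^{n−1})^{d+1} ). -/
open Polynomial

/-- The polynomial `1 + t + ⋯ + t^{n-1}`. -/
noncomputable def geomPoly (n : ℕ) : Polynomial ℤ :=
  ∑ j ∈ Finset.range n, X ^ j

/-- The operator `E_n`: discards terms whose exponent is not divisible by `n` and divides
each remaining exponent by `n`, i.e. `(E_n p).coeff k = p.coeff (n * k)`. -/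
noncomputable def Eop (n : ℕ) (p : Polynomial ℤ) : Polynomial ℤ :=
  ∑ k ∈ Finset.range (p.natDegree + 1), C (p.coeff (n * k)) * X ^ k

lemma geomPoly_coeff (M a : ℕ) : (geomPoly M).coeff a = if a < M then 1 else 0 := by
  simp [geomPoly, finset_sum_coeff, coeff_X_pow, Finset.sum_ite_eq]

lemma hockey_s12 (e k : ℕ) : ∑ b ∈ Finset.range (k+1), (b+e).choose e = (k+e+1).choose (e+1) := by
  induction k with
  | zero => simp
  | succ k ih =>
    rw [Finset.sum_range_succ, ih, show k + 1 + e = k + e + 1 from by omega,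
      Nat.choose_succ_succ (k+e+1) e]
    simp only [Nat.succ_eq_add_one]
    omega

lemma natDegree_geomPoly (M : ℕ) : (geomPoly M).natDegree ≤ M - 1 := by
  rw [natDegree_le_iff_coeff_eq_zero]
  intro a ha
  rw [geomPoly_coeff, if_neg (by omega)]

lemma geomPow_coeff (M e : ℕ) : ∀ k < M, (geomPoly M ^ (e+1)).coeff k = ((k+e).choose e : ℤ) := by
  induction e with
  | zero => intro k hk; simp [geomPoly_coeff, hk]
  | succ e ih =>
    intro k hk
    rw [pow_succ', coeff_mul, Finset.Nat.sum_antidiagonal_eq_sum_range_succ_mk]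
    have h1 : ∀ a ∈ Finset.range (k+1),
        (geomPoly M).coeff a * (geomPoly M ^ (e+1)).coeff (k - a)
        = (((k - a) + e).choose e : ℤ) := by
      intro a ha
      rw [Finset.mem_range] at ha
      rw [geomPoly_coeff, if_pos (by omega), ih (k - a) (by omega), one_mul]
    rw [Finset.sum_congr rfl h1, ← Finset.sum_range_reflect]
    have h2 : ∀ a ∈ Finset.range (k+1),
        (((k - (k - a)) + e).choose e : ℤ) = ((a + e).choose e : ℤ) := by
      intro a ha
      rw [Finset.mem_range] at ha
      congr 2
      omega
    rw [show k + 1 - 1 = k from rfl]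
    rw [Finset.sum_congr rfl h2, ← Nat.cast_sum, hockey_s12]
    rfl

lemma coeff_mul_geomPow (d : ℕ) (h : Polynomial ℤ) (hdeg : h.natDegree ≤ d) (M k : ℕ)
    (hk : k < M) : (h * geomPoly M ^ (d+1)).coeff k = ehrG d h k := by
  rw [coeff_mul, Finset.Nat.sum_antidiagonal_eq_sum_range_succ_mk]
  have h1 : ∀ a ∈ Finset.range (k+1),
      h.coeff a * (geomPoly M ^ (d+1)).coeff (k - a)
      = h.coeff a * (((k + d - a).choose d : ℕ) : ℤ) := by
    intro a ha
    rw [Finset.mem_range] at ha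
    rw [geomPow_coeff M d (k - a) (by omega), show k - a + d = k + d - a from by omega]
  rw [Finset.sum_congr rfl h1]
  unfold ehrG
  have e1 : ∑ a ∈ Finset.range (k+1), h.coeff a * (((k + d - a).choose d : ℕ) : ℤ)
      = ∑ a ∈ Finset.range (k+d+1), h.coeff a * (((k + d - a).choose d : ℕ) : ℤ) := by
    apply Finset.sum_subset (Finset.range_subset_range.2 (by omega))
    intro i hi1 hi2
    rw [Finset.mem_range] at hi1
    rw [Finset.mem_range, not_lt] at hi2
    rw [Nat.choose_eq_zero_of_lt (by omega), Nat.cast_zero, mul_zero]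
  have e2 : ∑ a ∈ Finset.range (d+1), h.coeff a * (((k + d - a).choose d : ℕ) : ℤ)
      = ∑ a ∈ Finset.range (k+d+1), h.coeff a * (((k + d - a).choose d : ℕ) : ℤ) := by
    apply Finset.sum_subset (Finset.range_subset_range.2 (by omega))
    intro i _ hi
    rw [Finset.mem_range, not_lt] at hi
    rw [coeff_eq_zero_of_natDegree_lt (by omega), zero_mul]
  rw [e1, e2]

lemma geom_mul_expand (n N : ℕ) (hn : 0 < n) :
    geomPoly (n * N) = geomPoly n * (expand ℤ n (geomPoly N)) := by
  have hXne : (X - 1 : Polynomial ℤ) ≠ 0 := by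
    intro hX
    have := congrArg (fun p => Polynomial.eval 0 p) hX
    simp at this
  apply mul_right_cancel₀ hXne
  have hg : ∀ M : ℕ, geomPoly M * (X - 1) = X ^ M - 1 := fun M => geom_sum_mul X M
  rw [hg, mul_assoc, mul_comm (expand ℤ n (geomPoly N)) (X - 1), ← mul_assoc, hg]
  have : (X ^ n - 1 : Polynomial ℤ) * expand ℤ n (geomPoly N)
      = expand ℤ n (geomPoly N * (X - 1)) := by
    rw [map_mul, map_sub, expand_X, map_one, mul_comm]
  rw [this, hg, map_sub, map_one, map_pow, expand_X, ← pow_mul]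

lemma P_coeff_zero (d n : ℕ) (hn : 0 < n) (h : Polynomial ℤ) (hdeg : h.natDegree ≤ d)
    {k : ℕ} (hk : d < k) : (h * geomPoly n ^ (d+1)).coeff (n * k) = 0 := by
  apply coeff_eq_zero_of_natDegree_lt
  have hP : (h * geomPoly n ^ (d+1)).natDegree ≤ d + (d+1) * (n-1) := by
    refine le_trans natDegree_mul_le (add_le_add hdeg ?_)
    refine le_trans natDegree_pow_le ?_
    exact Nat.mul_le_mul_left _ (natDegree_geomPoly n)
  refine lt_of_le_of_lt hP ?_
  have h1 : (d+1) * (n-1) + (d+1) = (d+1) * n := by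
    rw [← Nat.mul_succ, Nat.succ_eq_add_one, Nat.sub_add_cancel hn]
  have h2 : (d+1) * n ≤ n * k := by rw [mul_comm]; exact Nat.mul_le_mul_left n hk
  omega

lemma Eop_coeff (n : ℕ) (hn : 0 < n) (p : Polynomial ℤ) (k : ℕ) :
    (Eop n p).coeff k = p.coeff (n * k) := by
  unfold Eop
  rw [finset_sum_coeff]
  simp only [coeff_C_mul, coeff_X_pow, mul_ite, mul_one, mul_zero]
  rw [Finset.sum_ite_eq]
  split_ifs with hk
  · rfl
  · rw [Finset.mem_range, not_lt] at hk
    rw [coeff_eq_zero_of_natDegree_lt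
      (lt_of_lt_of_le (lt_of_lt_of_le hk (Nat.le_mul_of_pos_left k hn)) (le_refl _))]

lemma ehrG_sub (d : ℕ) (p q : Polynomial ℤ) (m : ℕ) :
    ehrG d (p - q) m = ehrG d p m - ehrG d q m := by
  simp [ehrG, coeff_sub, sub_mul, Finset.sum_sub_distrib]

lemma ehrG_eq_zero (d : ℕ) (p : Polynomial ℤ) (hdeg : p.natDegree ≤ d)
    (h0 : ∀ m, ehrG d p m = 0) : p = 0 := by
  have key : ∀ j, j ≤ d → p.coeff j = 0 := by
    intro j
    induction j using Nat.strong_induction_on with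
    | _ j ih =>
      intro hj
      have h1 := h0 j
      unfold ehrG at h1
      rw [Finset.sum_eq_single j] at h1
      · rwa [show j + d - j = d from by omega, Nat.choose_self, Nat.cast_one, mul_one] at h1
      · intro i hi hne
        rw [Finset.mem_range] at hi
        rcases lt_or_gt_of_ne hne with hlt | hgt
        · rw [ih i hlt (by omega), zero_mul]
        · rw [Nat.choose_eq_zero_of_lt (by omega), Nat.cast_zero, mul_zero]
      · intro hj2
        exact absurd (Finset.mem_range.2 (by omega)) hj2
  ext m
  rcases le_or_gt m d with hm | hm
  · simpa using key m hm
  · simp [coeff_eq_zero_of_natDegree_lt (lt_of_le_of_lt hdeg hm)]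

lemma main_id (d n : ℕ) (hn : 0 < n) (h : Polynomial ℤ) (hdeg : h.natDegree ≤ d) (m : ℕ) :
    ehrG d h (n * m) = ∑ i ∈ Finset.range (d+1),
      ((m + d - i).choose d : ℤ) * (h * geomPoly n ^ (d+1)).coeff (n * i) := by
  set P := h * geomPoly n ^ (d+1) with hPdef
  have hlt : n * m < n * (m+1) := by
    exact (Nat.mul_lt_mul_left hn).2 (Nat.lt_succ_self m)
  rw [← coeff_mul_geomPow d h hdeg (n*(m+1)) (n*m) hlt]
  rw [geom_mul_expand n (m+1) hn, mul_pow, ← map_pow]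
  set Q := geomPoly (m+1) ^ (d+1) with hQ
  rw [show h * ((geomPoly n)^(d+1) * expand ℤ n Q) = expand ℤ n Q * P from by rw [hPdef]; ring]
  rw [coeff_mul, Finset.Nat.sum_antidiagonal_eq_sum_range_succ_mk]
  have himg : ∑ b ∈ Finset.range (n*m+1), (expand ℤ n Q).coeff b * P.coeff (n*m - b)
      = ∑ b ∈ (Finset.range (m+1)).image (fun i => n * i),
          (expand ℤ n Q).coeff b * P.coeff (n*m - b) := by
    symm
    apply Finset.sum_subset
    · intro b hb
      simp only [Finset.mem_image, Finset.mem_range] at hb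
      obtain ⟨i, hi, rfl⟩ := hb
      rw [Finset.mem_range]
      have : n * i ≤ n * m := Nat.mul_le_mul_left n (by omega)
      omega
    · intro b hb hb2
      rw [Finset.mem_range] at hb
      rw [coeff_expand hn, if_neg, zero_mul]
      intro hdvd
      obtain ⟨i, rfl⟩ := hdvd
      apply hb2
      simp only [Finset.mem_image, Finset.mem_range]
      exact ⟨i, by
        have : n * i ≤ n * m := by omega
        have := Nat.le_of_mul_le_mul_left this hn
        omega, rfl⟩
  rw [himg, Finset.sum_image (fun i _ j _ hij => Nat.eq_of_mul_eq_mul_left hn hij)]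
  have hc : ∀ i ∈ Finset.range (m+1), (expand ℤ n Q).coeff (n*i) * P.coeff (n*m - n*i)
      = ((i + d).choose d : ℤ) * P.coeff (n * (m - i)) := by
    intro i hi
    rw [Finset.mem_range] at hi
    rw [coeff_expand_mul' hn, hQ, geomPow_coeff (m+1) d i (by omega),
      show n*m - n*i = n * (m - i) from by rw [Nat.mul_sub]]
  rw [Finset.sum_congr rfl hc, ← Finset.sum_range_reflect]
  have hc2 : ∀ j ∈ Finset.range (m+1),
      (((m + 1 - 1 - j) + d).choose d : ℤ) * P.coeff (n * (m - (m + 1 - 1 - j)))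
      = ((m + d - j).choose d : ℤ) * P.coeff (n * j) := by
    intro j hj
    rw [Finset.mem_range] at hj
    rw [show m + 1 - 1 - j = m - j from by omega, show m - (m - j) = j from by omega,
      show m - j + d = m + d - j from by omega]
  rw [Finset.sum_congr rfl hc2]
  have e1 : ∑ j ∈ Finset.range (m+1), ((m + d - j).choose d : ℤ) * P.coeff (n * j)
      = ∑ j ∈ Finset.range (m+d+1), ((m + d - j).choose d : ℤ) * P.coeff (n * j) := by
    apply Finset.sum_subset (Finset.range_subset_range.2 (by omega))
    intro j hj1 hj2
    rw [Finset.mem_range] at hj1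
    rw [Finset.mem_range, not_lt] at hj2
    rw [Nat.choose_eq_zero_of_lt (by omega), Nat.cast_zero, zero_mul]
  have e2 : ∑ j ∈ Finset.range (d+1), ((m + d - j).choose d : ℤ) * P.coeff (n * j)
      = ∑ j ∈ Finset.range (m+d+1), ((m + d - j).choose d : ℤ) * P.coeff (n * j) := by
    apply Finset.sum_subset (Finset.range_subset_range.2 (by omega))
    intro j hj1 hj2
    rw [Finset.mem_range, not_lt] at hj2
    rw [P_coeff_zero d n hn h hdeg (by omega), mul_zero]
  rw [e1, e2]

theorem stmt12 (d : ℕ) (hd : 0 < d)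
    (h : Polynomial ℤ) (hdeg : h.natDegree ≤ d)
    (n : ℕ) (hn : 0 < n)
    (Uh : Polynomial ℤ) (hUdeg : Uh.natDegree ≤ d)
    (hU : ∀ m : ℕ, ehrG d Uh m = ehrG d h (n * m)) :
    Uh = Eop n (h * geomPoly n ^ (d + 1)) := by
  have hEdeg : (Eop n (h * geomPoly n ^ (d+1))).natDegree ≤ d := by
    rw [natDegree_le_iff_coeff_eq_zero]
    intro k hk
    rw [Eop_coeff n hn]
    exact P_coeff_zero d n hn h hdeg hk
  have hsub : Uh - Eop n (h * geomPoly n ^ (d+1)) = 0 := by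
    apply ehrG_eq_zero d _ (le_trans (natDegree_sub_le _ _) (max_le hUdeg hEdeg))
    intro m
    have hE : ehrG d (Eop n (h * geomPoly n ^ (d+1))) m = ehrG d h (n*m) := by
      rw [main_id d n hn h hdeg m]
      unfold ehrG
      apply Finset.sum_congr rfl
      intro i _
      rw [Eop_coeff n hn, mul_comm]
    rw [ehrG_sub, hU m, hE, sub_self]
  exact sub_eq_zero.mp hsub
end

section
/- For every polynomial h(t) of degree at most d with integer coefficients and every positive integer n, writing the associated polynomial g as g(m) = ∑_{j=0}^{d} g_j m^j, one has the identity U_n h(t) = ∑_{j=0}^{d} g_j · A_j(t) · (1−t)^{d−j} · n^j. -/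
open Polynomial Finset

/-- The number of descents of a permutation `w` of `{0, …, d-1}`. -/
noncomputable def numDescents (d : ℕ) (w : Equiv.Perm (Fin d)) : ℕ :=
  Nat.card {j : Fin d // ∃ hj : (j : ℕ) + 1 < d, w ⟨(j : ℕ) + 1, hj⟩ < w j}

/-- The Eulerian number `A(d, i)`: the number of permutations of `d` elements with
exactly `i - 1` descents (with the convention `A(d, 0) = 0`). -/
noncomputable def eulerianNumber (d i : ℕ) : ℕ :=
  if i = 0 then 0 else Nat.card {w : Equiv.Perm (Fin d) // numDescents d w = i - 1}

/-- The Eulerian polynomial `A_d(t) = ∑_{i=1}^{d} A(d,i) tⁱ`, with `A_0(t) = 1`,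
as a polynomial with rational coefficients. -/
noncomputable def eulerianPolyQ (d : ℕ) : Polynomial ℚ :=
  if d = 0 then 1 else ∑ i ∈ Finset.Icc 1 d, C ((eulerianNumber d i : ℚ)) * X ^ i


/-- `j` is a descent position of `w`. -/
def IsDesc (n : ℕ) (w : Equiv.Perm (Fin n)) (j : ℕ) : Prop :=
  ∃ hj : j + 1 < n, w ⟨j + 1, hj⟩ < w ⟨j, Nat.lt_of_succ_lt hj⟩

/-- number of descents below position `i`. -/
noncomputable def cnt (n : ℕ) (w : Equiv.Perm (Fin n)) (i : ℕ) : ℕ :=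
  (@Finset.filter _ (IsDesc n w) (Classical.decPred _) (Finset.range i)).card

lemma cnt_succ_of_desc {n : ℕ} {w : Equiv.Perm (Fin n)} {i : ℕ} (h : IsDesc n w i) :
    cnt n w (i + 1) = cnt n w i + 1 := by
  classical
  unfold cnt
  rw [Finset.filter_congr_decidable, Finset.filter_congr_decidable,
    Finset.range_add_one, Finset.filter_insert, if_pos h,
    Finset.card_insert_of_notMem (by simp)]

lemma cnt_succ_of_not_desc {n : ℕ} {w : Equiv.Perm (Fin n)} {i : ℕ} (h : ¬ IsDesc n w i) :
    cnt n w (i + 1) = cnt n w i := by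
  classical
  unfold cnt
  rw [Finset.filter_congr_decidable, Finset.filter_congr_decidable,
    Finset.range_add_one, Finset.filter_insert, if_neg h]

lemma cnt_le_self (n : ℕ) (w : Equiv.Perm (Fin n)) (i : ℕ) : cnt n w i ≤ i := by
  classical
  exact le_trans (Finset.card_filter_le _ _) (by simp)

lemma cnt_add_le (n : ℕ) (w : Equiv.Perm (Fin n)) (i b : ℕ) :
    cnt n w (i + b) ≤ cnt n w i + b := by
  induction b with
  | zero => simp
  | succ p ih =>
      rw [← add_assoc]
      by_cases h : IsDesc n w (i + p)
      · rw [cnt_succ_of_desc h]; omega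
      · rw [cnt_succ_of_not_desc h]; omega

lemma cnt_mono (n : ℕ) (w : Equiv.Perm (Fin n)) {i i' : ℕ} (h : i ≤ i') :
    cnt n w i ≤ cnt n w i' := by
  classical
  exact Finset.card_le_card (Finset.filter_subset_filter _ (Finset.range_subset_range.2 h))

lemma cnt_eq_of_ge (n : ℕ) (w : Equiv.Perm (Fin n)) {i : ℕ} (h : n - 1 ≤ i) :
    cnt n w i = cnt n w (n - 1) := by
  classical
  unfold cnt
  congr 1
  apply Finset.ext
  intro j
  simp only [Finset.mem_filter, Finset.mem_range]
  constructor
  · rintro ⟨-, hd⟩; exact ⟨by obtain ⟨hj, -⟩ := hd; omega, hd⟩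
  · rintro ⟨hj, hd⟩; exact ⟨by omega, hd⟩

section Adj
variable {α : Type*} [Preorder α] {n : ℕ} {f : Fin n → α}

lemma adj_chain_lt (h : ∀ j, (hj : j + 1 < n) → f ⟨j, Nat.lt_of_succ_lt hj⟩ < f ⟨j + 1, hj⟩) :
    ∀ (l a : ℕ) (hb : a + l + 1 < n), f ⟨a, by omega⟩ < f ⟨a + l + 1, hb⟩ := by
  intro l
  induction l with
  | zero => intro a hb; exact h a hb
  | succ p ih =>
      intro a hb
      refine lt_trans (ih a (by omega)) ?_
      have key := h (a + p + 1) (by omega : (a + p + 1) + 1 < n)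
      have h1 : (⟨a + p + 1 + 1, by omega⟩ : Fin n) = ⟨a + (p + 1) + 1, hb⟩ :=
        Fin.mk_eq_mk.mpr (by omega)
      exact h1 ▸ key

lemma strictMono_of_adj
    (h : ∀ j, (hj : j + 1 < n) → f ⟨j, Nat.lt_of_succ_lt hj⟩ < f ⟨j + 1, hj⟩) :
    StrictMono f := by
  rintro ⟨a, ha⟩ ⟨b, hb⟩ hab
  rw [Fin.mk_lt_mk] at hab
  have key := adj_chain_lt h (b - a - 1) a (by omega)
  have h1 : (⟨a + (b - a - 1) + 1, by omega⟩ : Fin n) = ⟨b, hb⟩ :=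
    Fin.mk_eq_mk.mpr (by omega)
  exact h1 ▸ key

lemma adj_chain_le (h : ∀ j, (hj : j + 1 < n) → f ⟨j, Nat.lt_of_succ_lt hj⟩ ≤ f ⟨j + 1, hj⟩) :
    ∀ (l a : ℕ) (hb : a + l < n), f ⟨a, by omega⟩ ≤ f ⟨a + l, hb⟩ := by
  intro l
  induction l with
  | zero => intro a hb; simp
  | succ p ih =>
      intro a hb
      refine le_trans (ih a (by omega)) ?_
      have key := h (a + p) (by omega : (a + p) + 1 < n)
      have h1 : (⟨a + p + 1, by omega⟩ : Fin n) = ⟨a + (p + 1), hb⟩ :=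
        Fin.mk_eq_mk.mpr (by omega)
      exact h1 ▸ key

lemma monotone_of_adj
    (h : ∀ j, (hj : j + 1 < n) → f ⟨j, Nat.lt_of_succ_lt hj⟩ ≤ f ⟨j + 1, hj⟩) :
    Monotone f := by
  rintro ⟨a, ha⟩ ⟨b, hb⟩ hab
  rw [Fin.mk_le_mk] at hab
  have key := adj_chain_le h (b - a) a (by omega)
  have h1 : (⟨a + (b - a), by omega⟩ : Fin n) = ⟨b, hb⟩ := Fin.mk_eq_mk.mpr (by omega)
  exact h1 ▸ key

end Adj


lemma tie_chain {α β : Type*} [PartialOrder α] [Preorder β] {n : ℕ} {g : Fin n → α}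
    {u : Fin n → β} (hg : Monotone g)
    (hadj : ∀ j, (hj : j + 1 < n) → g ⟨j, Nat.lt_of_succ_lt hj⟩ = g ⟨j + 1, hj⟩ →
      u ⟨j, Nat.lt_of_succ_lt hj⟩ < u ⟨j + 1, hj⟩) :
    ∀ a b : Fin n, a < b → g a = g b → u a < u b := by
  have key : ∀ (l a : ℕ) (hb : a + l + 1 < n),
      g ⟨a, by omega⟩ = g ⟨a + l + 1, hb⟩ → u ⟨a, by omega⟩ < u ⟨a + l + 1, hb⟩ := by
    intro l
    induction l with
    | zero => intro a hb he; exact hadj a hb he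
    | succ p ih =>
        intro a hb he
        have e1 : (⟨a + p + 1 + 1, by omega⟩ : Fin n) = ⟨a + (p + 1) + 1, hb⟩ :=
          Fin.mk_eq_mk.mpr (by omega)
        have h1 : g ⟨a, by omega⟩ ≤ g ⟨a + p + 1, by omega⟩ := hg (by rw [Fin.mk_le_mk]; omega)
        have h2 : g ⟨a + p + 1, by omega⟩ ≤ g ⟨a + (p + 1) + 1, hb⟩ :=
          hg (by rw [Fin.mk_le_mk]; omega)
        have he1 : g ⟨a, by omega⟩ = g ⟨a + p + 1, by omega⟩ :=
          le_antisymm h1 (by rw [he]; exact h2)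
        have he2 : g ⟨a + p + 1, by omega⟩ = g ⟨a + (p + 1) + 1, hb⟩ := by
          rw [← he1]; exact he
        have step := hadj (a + p + 1) (by omega) (by rw [e1]; exact he2)
        rw [e1] at step
        exact lt_trans (ih a (by omega) he1) step
  rintro ⟨a, ha⟩ ⟨b, hb⟩ hab he
  rw [Fin.mk_lt_mk] at hab
  have e1 : (⟨a + (b - a - 1) + 1, by omega⟩ : Fin n) = ⟨b, hb⟩ := Fin.mk_eq_mk.mpr (by omega)
  have := key (b - a - 1) a (by omega) (by rw [e1]; exact he)
  rwa [e1] at this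

section Fibre
variable {n m : ℕ} {w : Equiv.Perm (Fin n)}

lemma sort_mono_adj {f : Fin n → Fin m} (hf : Tuple.sort f = w)
    (j : ℕ) (hj : j + 1 < n) :
    f (w ⟨j, Nat.lt_of_succ_lt hj⟩) ≤ f (w ⟨j + 1, hj⟩) := by
  have := (Tuple.eq_sort_iff.mp hf.symm).1
  exact this (by rw [Fin.mk_le_mk]; omega)

lemma sort_strict_adj {f : Fin n → Fin m} (hf : Tuple.sort f = w)
    (j : ℕ) (hj : j + 1 < n) (hd : IsDesc n w j) :
    f (w ⟨j, Nat.lt_of_succ_lt hj⟩) < f (w ⟨j + 1, hj⟩) := by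
  obtain ⟨hmono, hties⟩ := Tuple.eq_sort_iff.mp hf.symm
  refine lt_of_le_of_ne (sort_mono_adj hf j hj) (fun he => ?_)
  obtain ⟨hj', hlt⟩ := hd
  have := hties ⟨j, Nat.lt_of_succ_lt hj⟩ ⟨j + 1, hj⟩ (by rw [Fin.mk_lt_mk]; omega) he
  exact absurd this (not_lt.mpr hlt.le)

lemma sort_eq_of
    {f : Fin n → Fin m}
    (hmono : ∀ j, (hj : j + 1 < n) → f (w ⟨j, Nat.lt_of_succ_lt hj⟩) ≤ f (w ⟨j + 1, hj⟩))
    (hstrict : ∀ j, (hj : j + 1 < n) → IsDesc n w j →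
      f (w ⟨j, Nat.lt_of_succ_lt hj⟩) < f (w ⟨j + 1, hj⟩)) :
    Tuple.sort f = w := by
  have M : Monotone (fun i => f (w i)) := monotone_of_adj hmono
  have Tadj : ∀ j, (hj : j + 1 < n) → f (w ⟨j, Nat.lt_of_succ_lt hj⟩) = f (w ⟨j + 1, hj⟩) →
      w ⟨j, Nat.lt_of_succ_lt hj⟩ < w ⟨j + 1, hj⟩ := by
    intro j hj he
    by_cases hd : IsDesc n w j
    · exact absurd he (hstrict j hj hd).ne
    · have hne : w ⟨j, Nat.lt_of_succ_lt hj⟩ ≠ w ⟨j + 1, hj⟩ :=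
        fun hc => by simpa using w.injective hc
      have : ¬ (w ⟨j + 1, hj⟩ < w ⟨j, Nat.lt_of_succ_lt hj⟩) := fun hc => hd ⟨hj, hc⟩
      exact lt_of_le_of_ne (not_lt.mp this) hne
  have T := tie_chain (g := fun i => f (w i)) (u := fun i => w i) M Tadj
  exact (Tuple.eq_sort_iff.mpr ⟨M, fun i j hij he => T i j hij he⟩).symm

end Fibre

section Count
variable {n m : ℕ} {w : Equiv.Perm (Fin n)}

lemma desc_le_pred (hn : 0 < n) (w : Equiv.Perm (Fin n)) : cnt n w n ≤ n - 1 := by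
  rw [cnt_eq_of_ge n w (by omega : n - 1 ≤ n)]
  exact cnt_le_self n w (n - 1)

lemma cnt_ub (w : Equiv.Perm (Fin n)) (i : Fin n) :
    cnt n w n ≤ cnt n w i + ((n - 1) - (i : ℕ)) := by
  have hn : 0 < n := i.pos
  have hi : (i : ℕ) ≤ n - 1 := by omega
  have e2 : n - 1 = (i : ℕ) + ((n - 1) - (i : ℕ)) := by omega
  calc cnt n w n = cnt n w (n - 1) := cnt_eq_of_ge n w (by omega)
    _ = cnt n w ((i : ℕ) + ((n - 1) - (i : ℕ))) := by rw [← e2]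
    _ ≤ cnt n w i + ((n - 1) - (i : ℕ)) := cnt_add_le n w _ _

lemma off_le (w : Equiv.Perm (Fin n)) (i : Fin n) :
    (i : ℕ) - cnt n w i ≤ (n - 1) - cnt n w n := by
  have h1 := cnt_ub w i
  have h2 := cnt_le_self n w i
  have h3 : (i : ℕ) ≤ n - 1 := by have := i.pos; have := i.is_lt; omega
  omega

lemma card_strictMono_fun (q M : ℕ) :
    Nat.card {f : Fin q → Fin M // StrictMono f} = M.choose q := by
  classical
  rw [Nat.card_eq_fintype_card, Fintype.card_subtype]
  rw [show M.choose q = (Finset.powersetCard q (Finset.univ : Finset (Fin M))).card by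
    rw [Finset.card_powersetCard, Finset.card_univ, Fintype.card_fin]]
  refine Finset.card_bij' (fun f _ => Finset.univ.image f)
    (fun s hs => Finset.orderEmbOfFin s (Finset.mem_powersetCard_univ.mp hs)) ?_ ?_ ?_ ?_
  · intro f hf
    rw [Finset.mem_powersetCard_univ,
      Finset.card_image_of_injective _ ((Finset.mem_filter.mp hf).2).injective,
      Finset.card_univ, Fintype.card_fin]
  · intro s hs
    exact Finset.mem_filter.mpr ⟨Finset.mem_univ _, (Finset.orderEmbOfFin s _).strictMono⟩
  · intro f hf
    exact (Finset.orderEmbOfFin_unique _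
      (fun x => Finset.mem_image_of_mem _ (Finset.mem_univ x))
      (Finset.mem_filter.mp hf).2).symm
  · intro s hs
    apply Finset.coe_injective
    rw [Finset.coe_image, Finset.coe_univ, Set.image_univ, Finset.range_orderEmbOfFin]

lemma chain_nat {ψ : Fin n → ℕ}
    (h : ∀ j, (hj : j + 1 < n) → ψ ⟨j, Nat.lt_of_succ_lt hj⟩ < ψ ⟨j + 1, hj⟩) :
    ∀ (l a : ℕ) (hb : a + l < n), ψ ⟨a, by omega⟩ + l ≤ ψ ⟨a + l, hb⟩ := by
  intro l
  induction l with
  | zero => intro a hb; simp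
  | succ p ih =>
      intro a hb
      have key := h (a + p) (by omega : (a + p) + 1 < n)
      have e1 : (⟨a + p + 1, by omega⟩ : Fin n) = ⟨a + (p + 1), hb⟩ := Fin.mk_eq_mk.mpr (by omega)
      rw [e1] at key
      have := ih a (by omega)
      omega

end Count

section FibreCard
variable {n m : ℕ}

lemma fibre_card (hn : 0 < n) (m : ℕ) (w : Equiv.Perm (Fin n)) :
    Nat.card {f : Fin n → Fin m // Tuple.sort f = w}
      = (m + n - 1 - cnt n w n).choose n := by
  rcases Nat.eq_zero_or_pos m with hm | hm
  · subst hm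
    haveI : IsEmpty (Fin n → Fin 0) := ⟨fun f => (f ⟨0, hn⟩).elim0⟩
    rw [Nat.card_of_isEmpty]
    exact (Nat.choose_eq_zero_of_lt (by omega)).symm
  · have hkey : Nat.card {f : Fin n → Fin m // Tuple.sort f = w}
        = Nat.card {ψ : Fin n → Fin (m + ((n - 1) - cnt n w n)) // StrictMono ψ} := by
      refine Nat.card_eq_of_bijective
        (fun fp => ⟨fun i => ⟨(fp.1 (w i) : ℕ) + ((i : ℕ) - cnt n w i), by
            have h1 := off_le w i
            have h2 := (fp.1 (w i)).is_lt
            omega⟩, by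
          apply strictMono_of_adj
          intro j hj
          rw [Fin.mk_lt_mk]
          simp only [Fin.val_mk]
          by_cases hd : IsDesc n w j
          · have hlt := sort_strict_adj fp.2 j hj hd
            rw [Fin.lt_def] at hlt
            have e1 := cnt_succ_of_desc hd
            have e2 := cnt_le_self n w j
            omega
          · have hle := sort_mono_adj fp.2 j hj
            rw [Fin.le_def] at hle
            have e1 := cnt_succ_of_not_desc hd
            have e2 := cnt_le_self n w j
            omega⟩) ⟨?_, ?_⟩
      · -- injective
        intro f1 f2 heq
        apply Subtype.ext
        funext x
        have h1 := congrFun (congrArg Subtype.val heq) (w⁻¹ x)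
        have h2 : ((f1.1 (w (w⁻¹ x)) : ℕ) + (((w⁻¹ x : Fin n) : ℕ) - cnt n w (w⁻¹ x)))
            = ((f2.1 (w (w⁻¹ x)) : ℕ) + (((w⁻¹ x : Fin n) : ℕ) - cnt n w (w⁻¹ x))) :=
          congrArg Fin.val h1
        simp only [Equiv.Perm.inv_def, Equiv.apply_symm_apply] at h2
        exact Fin.ext (by omega)
      · -- surjective
        rintro ⟨ψ, hψ⟩
        have hadj : ∀ j, (hj : j + 1 < n) →
            (ψ ⟨j, Nat.lt_of_succ_lt hj⟩ : ℕ) < (ψ ⟨j + 1, hj⟩ : ℕ) := by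
          intro j hj
          exact hψ (by rw [Fin.mk_lt_mk]; omega)
        have hchain := chain_nat (ψ := fun i => (ψ i : ℕ)) hadj
        have low : ∀ i : Fin n, (i : ℕ) ≤ (ψ i : ℕ) := by
          intro i
          have := hchain (i : ℕ) 0 (by omega)
          have e1 : (⟨0 + (i : ℕ), by omega⟩ : Fin n) = i := Fin.ext (by simp)
          rw [e1] at this
          omega
        have up : ∀ i : Fin n, (ψ i : ℕ) + ((n - 1) - (i : ℕ)) < m + ((n - 1) - cnt n w n) := by
          intro i
          have := hchain ((n - 1) - (i : ℕ)) (i : ℕ) (by have := i.is_lt; omega)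
          have e1 : (⟨(i : ℕ) + ((n - 1) - (i : ℕ)), by have := i.is_lt; omega⟩ : Fin n)
              = ⟨n - 1, by omega⟩ := Fin.mk_eq_mk.mpr (by have := i.is_lt; omega)
          rw [e1] at this
          have e2 : (ψ ⟨n - 1, by omega⟩ : ℕ) < m + ((n - 1) - cnt n w n) := Fin.is_lt _
          have e3 : (⟨(i : ℕ), i.is_lt⟩ : Fin n) = i := Fin.ext rfl
          rw [e3] at this
          omega
        have gb : ∀ i : Fin n, (ψ i : ℕ) - ((i : ℕ) - cnt n w i) < m := by
          intro i
          have h1 := up i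
          have h2 := cnt_ub w i
          have h3 := cnt_le_self n w i
          have h4 : (i : ℕ) ≤ n - 1 := by have := i.is_lt; omega
          have h5 : cnt n w i ≤ cnt n w n := cnt_mono n w (by have := i.is_lt; omega)
          omega
        refine ⟨⟨fun x => ⟨(ψ (w⁻¹ x) : ℕ) - (((w⁻¹ x : Fin n) : ℕ) - cnt n w (w⁻¹ x)), gb _⟩,
          ?_⟩, ?_⟩
        · -- sort = w
          apply sort_eq_of
          · intro j hj
            rw [Fin.le_def]
            simp only [Equiv.Perm.inv_def, Equiv.symm_apply_apply]
            by_cases hd : IsDesc n w j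
            · have e1 := cnt_succ_of_desc hd
              have e2 := cnt_le_self n w j
              have e3 := hadj j hj
              have e4 := low ⟨j, Nat.lt_of_succ_lt hj⟩
              simp only [Fin.val_mk] at e3 e4 ⊢
              omega
            · have e1 := cnt_succ_of_not_desc hd
              have e2 := cnt_le_self n w j
              have e3 := hadj j hj
              have e4 := low ⟨j, Nat.lt_of_succ_lt hj⟩
              simp only [Fin.val_mk] at e3 e4 ⊢
              omega
          · intro j hj hd
            rw [Fin.lt_def]
            simp only [Equiv.Perm.inv_def, Equiv.symm_apply_apply]
            have e1 := cnt_succ_of_desc hd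
            have e2 := cnt_le_self n w j
            have e3 := hadj j hj
            have e4 := low ⟨j, Nat.lt_of_succ_lt hj⟩
            simp only [Fin.val_mk] at e3 e4 ⊢
            omega
        · -- roundtrip
          apply Subtype.ext
          funext i
          apply Fin.ext
          simp only [Equiv.Perm.inv_def, Equiv.symm_apply_apply, Fin.val_mk]
          have h1 := low i
          exact Nat.sub_add_cancel (le_trans (Nat.sub_le _ _) h1)
    rw [hkey, card_strictMono_fun]
    congr 1
    have := desc_le_pred hn w
    omega

end FibreCard



lemma numDescents_eq_cnt (n : ℕ) (w : Equiv.Perm (Fin n)) : numDescents n w = cnt n w n := by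
  classical
  have e : {j : Fin n // ∃ hj : (j : ℕ) + 1 < n, w ⟨(j : ℕ) + 1, hj⟩ < w j} ≃
      {x : ℕ // x ∈ @Finset.filter _ (IsDesc n w) (Classical.decPred _) (Finset.range n)} :=
    { toFun := fun j => ⟨(j.1 : ℕ), Finset.mem_filter.mpr ⟨Finset.mem_range.mpr j.1.is_lt, j.2⟩⟩
      invFun := fun x => ⟨⟨x.1, Finset.mem_range.mp (Finset.mem_filter.mp x.2).1⟩,
        (Finset.mem_filter.mp x.2).2⟩
      left_inv := fun j => Subtype.ext (Fin.ext rfl)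
      right_inv := fun x => Subtype.ext rfl }
  rw [numDescents]
  exact (Nat.card_congr e).trans (Nat.card_eq_finsetCard _)

lemma eulerianNumber_succ_eq (n k : ℕ) :
    eulerianNumber n (k + 1)
      = (Finset.univ.filter (fun w : Equiv.Perm (Fin n) => cnt n w n = k)).card := by
  classical
  rw [eulerianNumber, if_neg (Nat.succ_ne_zero k)]
  have e : {w : Equiv.Perm (Fin n) // numDescents n w = k + 1 - 1} ≃
      {w : Equiv.Perm (Fin n) // cnt n w n = k} :=
    Equiv.subtypeEquivRight (fun w => by rw [numDescents_eq_cnt]; omega)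
  rw [Nat.card_congr e, Nat.card_eq_fintype_card, Fintype.card_subtype]

lemma worpitzky_s13 (n : ℕ) (hn : 0 < n) (m : ℕ) :
    m ^ n = ∑ i ∈ Finset.Icc 1 n, eulerianNumber n i * ((m + n - i).choose n) := by
  classical
  have h1 : m ^ n = ∑ w : Equiv.Perm (Fin n),
      (m + n - 1 - cnt n w n).choose n := by
    have h0 : m ^ n = (Finset.univ : Finset (Fin n → Fin m)).card := by
      rw [Finset.card_univ]; simp [Fintype.card_fun]
    rw [h0, Finset.card_eq_sum_card_fiberwise
      (f := fun f => Tuple.sort f) (t := Finset.univ) (fun f _ => Finset.mem_univ _)]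
    refine Finset.sum_congr rfl (fun w _ => ?_)
    rw [← Fintype.card_subtype, ← Nat.card_eq_fintype_card]
    exact fibre_card hn m w
  rw [h1, ← Finset.sum_fiberwise_of_maps_to
    (g := fun w : Equiv.Perm (Fin n) => cnt n w n) (t := Finset.range n)
    (fun w _ => Finset.mem_range.mpr (by have := desc_le_pred hn w; omega)) _]
  refine Finset.sum_nbij' (fun k => k + 1) (fun i => i - 1) ?_ ?_ ?_ ?_ ?_
  · intro k hk; rw [Finset.mem_range] at hk; rw [Finset.mem_Icc]; omega
  · intro i hi; rw [Finset.mem_Icc] at hi; rw [Finset.mem_range]; omega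
  · intro k _; omega
  · intro i hi; rw [Finset.mem_Icc] at hi; omega
  · intro k hk
    rw [eulerianNumber_succ_eq]
    have : ∀ w ∈ Finset.univ.filter (fun w : Equiv.Perm (Fin n) => cnt n w n = k),
        (m + n - 1 - cnt n w n).choose n = (m + n - (k + 1)).choose n := by
      intro w hw
      rw [(Finset.mem_filter.mp hw).2]
      congr 1
      omega
    rw [Finset.sum_congr rfl this, Finset.sum_const, smul_eq_mul]

/-- The "Ehrhart numerator to polynomial values" transform over ℚ. -/
noncomputable def Gq (d : ℕ) (p : Polynomial ℚ) (m : ℕ) : ℚ :=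
  ∑ i ∈ Finset.range (d + 1), p.coeff i * ((m + d - i).choose d : ℚ)

lemma Gq_one_sub_X_mul {d : ℕ} {p : Polynomial ℚ} (hp : p.natDegree ≤ d) (m : ℕ) :
    Gq (d + 1) ((1 - X) * p) m = Gq d p m := by
  have hexp : (1 - X) * p = p - X * p := by ring
  have hA : ∑ i ∈ Finset.range (d + 2), p.coeff i * (((m + (d + 1) - i).choose (d + 1) : ℚ))
      = ∑ i ∈ Finset.range (d + 1), p.coeff i * (((m + (d + 1) - i).choose (d + 1) : ℚ)) := by
    rw [Finset.sum_range_succ, coeff_eq_zero_of_natDegree_lt (by omega), zero_mul, add_zero]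
  have hB : ∑ i ∈ Finset.range (d + 2), (X * p).coeff i * (((m + (d + 1) - i).choose (d + 1) : ℚ))
      = ∑ i ∈ Finset.range (d + 1), p.coeff i * (((m + d - i).choose (d + 1) : ℚ)) := by
    rw [Finset.sum_range_succ']
    simp only [coeff_X_mul]
    have h00 : (X * p).coeff 0 = 0 := by rw [mul_coeff_zero, coeff_X_zero, zero_mul]
    rw [h00, zero_mul, add_zero]
    refine Finset.sum_congr rfl (fun i hi => ?_)
    congr 3
    omega
  unfold Gq
  rw [hexp]
  simp only [coeff_sub, sub_mul]
  rw [Finset.sum_sub_distrib, hA, hB, ← Finset.sum_sub_distrib]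
  refine Finset.sum_congr rfl (fun i hi => ?_)
  rw [Finset.mem_range] at hi
  rw [← mul_sub]
  congr 1
  have e1 : m + (d + 1) - i = (m + d - i) + 1 := by omega
  rw [e1, Nat.choose_succ_succ (m + d - i) d]
  push_cast
  ring

lemma Gq_inj {d : ℕ} {p : Polynomial ℚ} (hp : p.natDegree ≤ d)
    (h0 : ∀ m : ℕ, m ≤ d → Gq d p m = 0) : p = 0 := by
  have key : ∀ m : ℕ, m ≤ d → p.coeff m = 0 := by
    intro m
    induction m using Nat.strong_induction_on with
    | _ m ih =>
      intro hm
      have hs := h0 m hm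
      unfold Gq at hs
      rw [← Finset.sum_subset (Finset.range_subset_range.mpr (by omega : m + 1 ≤ d + 1))
        (fun i hi hni => by
          rw [Finset.mem_range] at hi
          rw [Finset.mem_range, not_lt] at hni
          have : (m + d - i).choose d = 0 := Nat.choose_eq_zero_of_lt (by omega)
          rw [this, Nat.cast_zero, mul_zero])] at hs
      rw [Finset.sum_range_succ] at hs
      have e1 : m + d - m = d := by omega
      rw [e1, Nat.choose_self, Nat.cast_one, mul_one] at hs
      rw [Finset.sum_eq_zero (fun i hi => by
        rw [Finset.mem_range] at hi
        rw [ih i hi (by omega), zero_mul]), zero_add] at hs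
      exact hs
  ext i
  rw [coeff_zero]
  rcases le_or_gt i d with hi | hi
  · exact key i hi
  · exact coeff_eq_zero_of_natDegree_lt (lt_of_le_of_lt hp hi)

lemma Gq_sum {d : ℕ} {s : Finset ℕ} {F : ℕ → Polynomial ℚ} (m : ℕ) :
    Gq d (∑ j ∈ s, F j) m = ∑ j ∈ s, Gq d (F j) m := by
  unfold Gq
  simp only [finset_sum_coeff, Finset.sum_mul]
  exact Finset.sum_comm

lemma Gq_C_mul {d : ℕ} (c : ℚ) (p : Polynomial ℚ) (m : ℕ) :
    Gq d (C c * p) m = c * Gq d p m := by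
  unfold Gq
  simp only [coeff_C_mul, Finset.mul_sum, mul_assoc]


lemma natDegree_eulerianPolyQ (d : ℕ) : (eulerianPolyQ d).natDegree ≤ d := by
  unfold eulerianPolyQ
  split_ifs with hd
  · simp [hd]
  · refine Polynomial.natDegree_sum_le_of_forall_le _ _ (fun i hi => ?_)
    refine le_trans (natDegree_C_mul_le _ _) ?_
    rw [natDegree_X_pow]
    exact (Finset.mem_Icc.mp hi).2

lemma Gq_eulerianPolyQ (j m : ℕ) : Gq j (eulerianPolyQ j) m = (m : ℚ) ^ j := by
  rcases Nat.eq_zero_or_pos j with hj | hj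
  · subst hj
    unfold Gq eulerianPolyQ
    simp
  · unfold Gq
    have hcoeff : ∀ l : ℕ, (eulerianPolyQ j).coeff l
        = if l ∈ Finset.Icc 1 j then ((eulerianNumber j l : ℚ)) else 0 := by
      intro l
      unfold eulerianPolyQ
      rw [if_neg (by omega)]
      rw [finset_sum_coeff]
      simp only [coeff_C_mul, coeff_X_pow, mul_ite, mul_one, mul_zero]
      rw [Finset.sum_ite_eq (Finset.Icc 1 j) l (fun i => ((eulerianNumber j i : ℚ)))]
    calc ∑ i ∈ Finset.range (j + 1), (eulerianPolyQ j).coeff i * ((m + j - i).choose j : ℚ)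
        = ∑ i ∈ Finset.range (j + 1),
          (if i ∈ Finset.Icc 1 j then ((eulerianNumber j i : ℚ)) * ((m + j - i).choose j : ℚ)
            else 0) := by
          refine Finset.sum_congr rfl (fun i _ => ?_)
          rw [hcoeff i, ite_mul, zero_mul]
      _ = ∑ i ∈ Finset.range (j + 1) ∩ Finset.Icc 1 j,
            ((eulerianNumber j i : ℚ)) * ((m + j - i).choose j : ℚ) := Finset.sum_ite_mem _ _ _
      _ = ∑ i ∈ Finset.Icc 1 j, ((eulerianNumber j i : ℚ)) * ((m + j - i).choose j : ℚ) := by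
          congr 1
          refine Finset.inter_eq_right.mpr (fun x hx => ?_)
          rw [Finset.mem_Icc] at hx
          rw [Finset.mem_range]
          omega
      _ = (m : ℚ) ^ j := by
          rw [← Nat.cast_pow]
          rw [worpitzky_s13 j hj m]
          push_cast
          rfl

lemma natDegree_eulerian_mul (j l : ℕ) :
    (eulerianPolyQ j * (1 - X) ^ l).natDegree ≤ j + l := by
  refine le_trans (natDegree_mul_le) ?_
  have h1 : ((1 - X : Polynomial ℚ) ^ l).natDegree ≤ l := by
    refine le_trans (natDegree_pow_le) ?_
    have : (1 - X : Polynomial ℚ).natDegree ≤ 1 := by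
      refine le_trans (natDegree_sub_le _ _) ?_
      simp
    calc l * (1 - X : Polynomial ℚ).natDegree ≤ l * 1 := Nat.mul_le_mul_left l this
      _ = l := mul_one l
  have h2 := natDegree_eulerianPolyQ j
  omega

lemma Gq_eulerian_mul (j l m : ℕ) :
    Gq (j + l) (eulerianPolyQ j * (1 - X) ^ l) m = (m : ℚ) ^ j := by
  induction l with
  | zero => simpa using Gq_eulerianPolyQ j m
  | succ p ih =>
      have hre : eulerianPolyQ j * (1 - X) ^ (p + 1)
          = (1 - X) * (eulerianPolyQ j * (1 - X) ^ p) := by ring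
      rw [show j + (p + 1) = (j + p) + 1 by omega, hre,
        Gq_one_sub_X_mul (natDegree_eulerian_mul j p) m, ih]

lemma choose_poly_eval (d s m : ℕ) :
    (C ((d.factorial : ℚ)⁻¹) * (descPochhammer ℚ d).comp (X + C (s : ℚ))).eval (m : ℚ)
      = ((m + s).choose d : ℚ) := by
  rw [eval_mul, eval_C, eval_comp, eval_add, eval_X, eval_C]
  have e1 : (m : ℚ) + (s : ℚ) = ((m + s : ℕ) : ℚ) := by push_cast; ring
  rw [e1, descPochhammer_eval_eq_descFactorial ℚ (m + s) d,
    Nat.descFactorial_eq_factorial_mul_choose]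
  have hfac : ((d.factorial : ℚ)) ≠ 0 := Nat.cast_ne_zero.mpr d.factorial_ne_zero
  push_cast
  field_simp

lemma g_natDegree_le (d : ℕ) (h : Polynomial ℤ) (g : Polynomial ℚ)
    (hg : ∀ m : ℕ, g.eval (m : ℚ) =
      ∑ i ∈ Finset.range (d + 1), (h.coeff i : ℚ) * ((m + d - i).choose d : ℚ)) :
    g.natDegree ≤ d := by
  set q : Polynomial ℚ := ∑ i ∈ Finset.range (d + 1),
    C ((h.coeff i : ℚ)) * (C ((d.factorial : ℚ)⁻¹) * (descPochhammer ℚ d).comp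
      (X + C (((d - i : ℕ) : ℚ)))) with hq
  have heval : ∀ m : ℕ, q.eval (m : ℚ) = g.eval (m : ℚ) := by
    intro m
    rw [hg m, hq, eval_finset_sum]
    refine Finset.sum_congr rfl (fun i hi => ?_)
    rw [Finset.mem_range] at hi
    rw [eval_mul, eval_C, choose_poly_eval d (d - i) m]
    congr 3
    omega
  have hgq : g = q := by
    refine Polynomial.eq_of_infinite_eval_eq g q ?_
    refine Set.infinite_of_injective_forall_mem (f := fun m : ℕ => (m : ℚ))
      Nat.cast_injective (fun m => ?_)
    exact (heval m).symm
  rw [hgq]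
  refine Polynomial.natDegree_sum_le_of_forall_le _ _ (fun i _ => ?_)
  refine le_trans (natDegree_C_mul_le _ _) (le_trans (natDegree_C_mul_le _ _) ?_)
  refine le_trans natDegree_comp_le ?_
  rw [natDegree_X_add_C]
  rw [descPochhammer_natDegree]
  omega


lemma Gq_sub {d : ℕ} (p q : Polynomial ℚ) (m : ℕ) :
    Gq d (p - q) m = Gq d p m - Gq d q m := by
  unfold Gq
  rw [← Finset.sum_sub_distrib]
  refine Finset.sum_congr rfl (fun i _ => ?_)
  rw [coeff_sub, sub_mul]


theorem stmt13 (d : ℕ) (hd : 0 < d)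
    (h : Polynomial ℤ) (hdeg : h.natDegree ≤ d)
    (g : Polynomial ℚ)
    -- g(m) = ∑_{i=0}^{d} h_i C(m+d-i, d)
    (hg : ∀ m : ℕ, g.eval (m : ℚ) =
      ∑ i ∈ Finset.range (d + 1), (h.coeff i : ℚ) * ((m + d - i).choose d : ℚ))
    (n : ℕ) (hn : 0 < n)
    (Uh : Polynomial ℤ) (hUdeg : Uh.natDegree ≤ d)
    (hU : ∀ m : ℕ, ehrG d Uh m = ehrG d h (n * m)) :
    Uh.map (Int.castRingHom ℚ) =
      ∑ j ∈ Finset.range (d + 1),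
        C (g.coeff j * (n : ℚ) ^ j) * eulerianPolyQ j * (1 - X) ^ (d - j) := by
  set R : Polynomial ℚ := ∑ j ∈ Finset.range (d + 1),
    C (g.coeff j * (n : ℚ) ^ j) * eulerianPolyQ j * (1 - X) ^ (d - j) with hR
  have hgdeg : g.natDegree ≤ d := g_natDegree_le d h g hg
  have hGqR : ∀ m : ℕ, Gq d R m
      = ∑ j ∈ Finset.range (d + 1), g.coeff j * (n : ℚ) ^ j * (m : ℚ) ^ j := by
    intro m
    rw [hR, Gq_sum]
    refine Finset.sum_congr rfl (fun j hj => ?_)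
    rw [Finset.mem_range] at hj
    rw [mul_assoc, Gq_C_mul]
    have hmul := Gq_eulerian_mul j (d - j) m
    rw [show j + (d - j) = d from by omega] at hmul
    rw [hmul]
  have hGqL : ∀ m : ℕ, Gq d (Uh.map (Int.castRingHom ℚ)) m = (ehrG d Uh m : ℚ) := by
    intro m
    unfold Gq ehrG
    push_cast [coeff_map]
    rfl
  have hval : ∀ m : ℕ,
      Gq d (Uh.map (Int.castRingHom ℚ)) m = Gq d R m := by
    intro m
    rw [hGqL, hGqR, hU m]
    have h1 : (ehrG d h (n * m) : ℚ) = g.eval ((n * m : ℕ) : ℚ) := by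
      rw [hg (n * m)]
      unfold ehrG
      push_cast
      rfl
    rw [h1, eval_eq_sum_range' (lt_of_le_of_lt hgdeg (lt_add_one d))]
    refine Finset.sum_congr rfl (fun j _ => ?_)
    push_cast
    ring
  have hRdeg : R.natDegree ≤ d := by
    rw [hR]
    refine Polynomial.natDegree_sum_le_of_forall_le _ _ (fun j hj => ?_)
    rw [Finset.mem_range] at hj
    rw [mul_assoc]
    refine le_trans (natDegree_C_mul_le _ _) ?_
    refine le_trans (natDegree_eulerian_mul j (d - j)) ?_
    omega
  have hdeg2 : (Uh.map (Int.castRingHom ℚ) - R).natDegree ≤ d := by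
    refine le_trans (natDegree_sub_le _ _) ?_
    refine max_le (le_trans natDegree_map_le hUdeg) hRdeg
  have hzero : Uh.map (Int.castRingHom ℚ) - R = 0 := by
    refine Gq_inj hdeg2 (fun m _ => ?_)
    rw [Gq_sub, hval m, sub_self]
  exact sub_eq_zero.mp hzero
end
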